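/- arXiv:0806.4712 — 6 statements merged into one kernel-verified Lean document; each statement's English description precedes it below -/
import Mathlib

section
/- For every δ > 0 there exists a constant D > 0 such that the following holds: for every unital C*-algebra A, every positive element a ∈ A with ‖a‖ ≤ 1, and every b ∈ A with ‖b‖ ≤ 1, one has ‖b·√a − √a·b‖ ≤ D·‖a·b − b·a‖ + δ. -/
open Polynomial Finset

lemma norm_pow_comm_le {A : Type*} [NormedRing A] (a b : A) (ha : ‖a‖ ≤ 1) (n : ℕ) :
    ‖a ^ n * b - b * a ^ n‖ ≤ n * ‖a * b - b * a‖ := by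
  have haux : ∀ (m : ℕ) (c : A), ‖a ^ m * c‖ ≤ ‖c‖ := by
    intro m c
    cases m with
    | zero => simp
    | succ m =>
      calc ‖a ^ (m + 1) * c‖ ≤ ‖a ^ (m + 1)‖ * ‖c‖ := norm_mul_le _ _
        _ ≤ ‖a‖ ^ (m + 1) * ‖c‖ := by
            gcongr; exact norm_pow_le' a (Nat.succ_pos m)
        _ ≤ 1 * ‖c‖ := by
            gcongr
            exact pow_le_one₀ (norm_nonneg a) ha
        _ = ‖c‖ := one_mul _
  induction n with
  | zero => simp
  | succ n ih =>
    have key : a ^ (n + 1) * b - b * a ^ (n + 1)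
        = a ^ n * (a * b - b * a) + (a ^ n * b - b * a ^ n) * a := by
      rw [pow_succ]
      noncomm_ring
    rw [key]
    calc ‖a ^ n * (a * b - b * a) + (a ^ n * b - b * a ^ n) * a‖
        ≤ ‖a ^ n * (a * b - b * a)‖ + ‖(a ^ n * b - b * a ^ n) * a‖ := norm_add_le _ _
      _ ≤ ‖a * b - b * a‖ + ‖a ^ n * b - b * a ^ n‖ * ‖a‖ := by
          gcongr
          · exact haux n _
          · exact norm_mul_le _ _
      _ ≤ ‖a * b - b * a‖ + (n * ‖a * b - b * a‖) * 1 := by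
          gcongr
      _ = (n + 1 : ℕ) * ‖a * b - b * a‖ := by push_cast; ring

lemma norm_aeval_comm_le {A : Type*} [NormedRing A] (p : ℝ[X]) (a b : A)
    [NormedAlgebra ℝ A] (ha : ‖a‖ ≤ 1) :
    ‖b * aeval a p - aeval a p * b‖ ≤
      (∑ i ∈ Finset.range (p.natDegree + 1), |p.coeff i| * i) * ‖a * b - b * a‖ := by
  rw [aeval_eq_sum_range]
  have key : b * (∑ i ∈ Finset.range (p.natDegree + 1), p.coeff i • a ^ i)
      - (∑ i ∈ Finset.range (p.natDegree + 1), p.coeff i • a ^ i) * b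
      = ∑ i ∈ Finset.range (p.natDegree + 1), p.coeff i • (b * a ^ i - a ^ i * b) := by
    rw [Finset.mul_sum, Finset.sum_mul, ← Finset.sum_sub_distrib]
    congr 1
    ext i
    rw [smul_sub, mul_smul_comm, smul_mul_assoc]
  rw [key, Finset.sum_mul]
  refine (norm_sum_le _ _).trans (Finset.sum_le_sum fun i _ ↦ ?_)
  rw [norm_smul, Real.norm_eq_abs, mul_assoc]
  gcongr
  rw [← norm_neg]
  simpa [neg_sub] using norm_pow_comm_le a b ha i

/-- For every `δ > 0` there is a constant `D > 0` such that for every unital C*-algebra `A`,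
every positive `a : A` with `‖a‖ ≤ 1` and every `b : A` with `‖b‖ ≤ 1`, one has
`‖b·√a − √a·b‖ ≤ D·‖a·b − b·a‖ + δ`, where `√a` is the positive square root given by the
continuous functional calculus. -/
theorem sqrt_almost_commutes (δ : ℝ) (hδ : 0 < δ) :
    ∃ D : ℝ, 0 < D ∧
      ∀ (A : Type) [CStarAlgebra A] [PartialOrder A] [StarOrderedRing A]
        (a b : A), 0 ≤ a → ‖a‖ ≤ 1 → ‖b‖ ≤ 1 →
        ‖b * CFC.sqrt a - CFC.sqrt a * b‖ ≤ D * ‖a * b - b * a‖ + δ := by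
  obtain ⟨p, hp⟩ := exists_polynomial_near_of_continuousOn 0 1 Real.sqrt
    (Real.continuous_sqrt.continuousOn) (δ / 2) (by positivity)
  set C : ℝ := ∑ i ∈ Finset.range (p.natDegree + 1), |p.coeff i| * i with hC
  have hC0 : 0 ≤ C := Finset.sum_nonneg fun i _ ↦ by positivity
  refine ⟨C + 1, by linarith, fun A _ _ _ a b ha hna hnb ↦ ?_⟩
  rcases subsingleton_or_nontrivial A with hA | hA
  · have : b * CFC.sqrt a - CFC.sqrt a * b = 0 := Subsingleton.elim _ _
    rw [this, norm_zero]
    positivity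
  -- spectrum of `a` lies in `[0, 1]`
  have hspec : spectrum ℝ a ⊆ Set.Icc 0 1 := by
    intro x hx
    refine ⟨spectrum_nonneg_of_nonneg ha hx, ?_⟩
    calc x ≤ |x| := le_abs_self x
      _ = ‖x‖ := rfl
      _ ≤ ‖a‖ := spectrum.norm_le_norm_of_mem hx
      _ ≤ 1 := hna
  -- `√a = cfc Real.sqrt a`
  have hsa : IsSelfAdjoint a := .of_nonneg ha
  have hsqrt : CFC.sqrt a = cfc Real.sqrt a := by
    rw [CFC.sqrt_eq_cfc, cfc_nnreal_eq_real NNReal.sqrt a ha]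
    exact cfc_congr fun x hx ↦ by rw [Real.sqrt]
  -- distance from `√a` to the polynomial approximation
  have hdist : ‖cfc Real.sqrt a - aeval a p‖ ≤ δ / 2 := by
    rw [← cfc_polynomial p a, ← cfc_sub Real.sqrt p.eval a]
    refine norm_cfc_le (by positivity) fun x hx ↦ ?_
    have := hp x (hspec hx)
    rw [Real.norm_eq_abs, abs_sub_comm]
    linarith [abs_nonneg (p.eval x - Real.sqrt x)]
  set P := aeval a p with hP
  have key : b * CFC.sqrt a - CFC.sqrt a * b
      = b * (CFC.sqrt a - P) + (b * P - P * b) + (P - CFC.sqrt a) * b := by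
    noncomm_ring
  rw [key]
  have h1 : ‖b * (CFC.sqrt a - P)‖ ≤ δ / 2 := by
    calc ‖b * (CFC.sqrt a - P)‖ ≤ ‖b‖ * ‖CFC.sqrt a - P‖ := norm_mul_le _ _
      _ ≤ 1 * (δ / 2) := by
          refine mul_le_mul hnb ?_ (norm_nonneg _) zero_le_one
          rw [hsqrt]; exact hdist
      _ = δ / 2 := one_mul _
  have h3 : ‖(P - CFC.sqrt a) * b‖ ≤ δ / 2 := by
    calc ‖(P - CFC.sqrt a) * b‖ ≤ ‖P - CFC.sqrt a‖ * ‖b‖ := norm_mul_le _ _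
      _ ≤ (δ / 2) * 1 := by
          refine mul_le_mul ?_ hnb (norm_nonneg _) (by positivity)
          rw [hsqrt, ← norm_neg, neg_sub]; exact hdist
      _ = δ / 2 := mul_one _
  have h2 : ‖b * P - P * b‖ ≤ C * ‖a * b - b * a‖ :=
    norm_aeval_comm_le p a b hna
  calc ‖b * (CFC.sqrt a - P) + (b * P - P * b) + (P - CFC.sqrt a) * b‖
      ≤ ‖b * (CFC.sqrt a - P) + (b * P - P * b)‖ + ‖(P - CFC.sqrt a) * b‖ := norm_add_le _ _
    _ ≤ ‖b * (CFC.sqrt a - P)‖ + ‖b * P - P * b‖ + ‖(P - CFC.sqrt a) * b‖ := by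
        gcongr; exact norm_add_le _ _
    _ ≤ δ / 2 + C * ‖a * b - b * a‖ + δ / 2 := by gcongr
    _ ≤ (C + 1) * ‖a * b - b * a‖ + δ := by nlinarith [norm_nonneg (a * b - b * a)]
end

section
/- Let H be a complex Hilbert space, let u and v be unitary operators on H with u·v = v·u, let p be an orthogonal projection on H, and let t ≥ 0 satisfy ‖p·v − v·p‖ ≤ t. Then ‖(p·v·p)·(p·u*·p·u·p) − (p·u*·p·u·p)·(p·v·p)‖ ≤ 3t. -/
section Aux

variable {A : Type*} [NormedRing A] [StarRing A] [CStarRing A]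

lemma proj_norm_le_one {p : A} (hsa : IsSelfAdjoint p) (hid : p * p = p) : ‖p‖ ≤ 1 := by
  have h : ‖p‖ * ‖p‖ = ‖p‖ := by
    rw [← CStarRing.norm_star_mul_self, hsa.star_eq, hid]
  nlinarith [norm_nonneg p]

lemma norm_mul_le_of_le_one {a b : A} (ha : ‖a‖ ≤ 1) : ‖a * b‖ ≤ ‖b‖ := by
  calc ‖a * b‖ ≤ ‖a‖ * ‖b‖ := norm_mul_le a b
  _ ≤ 1 * ‖b‖ := by gcongr
  _ = ‖b‖ := one_mul _

end Aux

/-- If `u, v` are commuting unitaries on a complex Hilbert space `H`, `p` is an orthogonal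
projection and `‖p·v − v·p‖ ≤ t`, then
`‖(p·v·p)·(p·u*·p·u·p) − (p·u*·p·u·p)·(p·v·p)‖ ≤ 3t`. -/
theorem compression_commutator_bound {H : Type} [NormedAddCommGroup H]
    [InnerProductSpace ℂ H] [CompleteSpace H]
    (u v p : H →L[ℂ] H)
    (hu : u ∈ unitary (H →L[ℂ] H)) (hv : v ∈ unitary (H →L[ℂ] H))
    (huv : u * v = v * u)
    (hp_sa : IsSelfAdjoint p) (hp_idem : IsIdempotentElem p)
    (t : ℝ) (ht : 0 ≤ t) (hpv : ‖p * v - v * p‖ ≤ t) :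
    ‖(p * v * p) * (p * star u * p * u * p) - (p * star u * p * u * p) * (p * v * p)‖
      ≤ 3 * t := by
  set u' := star u with hu'
  set c := p * v - v * p with hc
  have hu1 : u' * u = 1 := hu.1
  have hu2 : u * u' = 1 := hu.2
  have hpp : p * p = p := hp_idem
  -- star u commutes with v
  have h1 : u' * v = v * u' := by
    have : u' * (u * v) * u' = u' * (v * u) * u' := by rw [huv]
    calc u' * v = u' * v * (u * u') := by rw [hu2, mul_one]
    _ = u' * (v * u) * u' := by noncomm_ring
    _ = u' * (u * v) * u' := by rw [huv]
    _ = (u' * u) * v * u' := by noncomm_ring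
    _ = v * u' := by rw [hu1, one_mul]
  -- norm bounds
  have hnp : ‖p‖ ≤ 1 := proj_norm_le_one hp_sa hpp
  have hnq : ‖p - 1‖ ≤ 1 := by
    have hsa : IsSelfAdjoint ((1 : H →L[ℂ] H) - p) := (IsSelfAdjoint.one (H →L[ℂ] H)).sub hp_sa
    have hid : ((1 : H →L[ℂ] H) - p) * (1 - p) = 1 - p := by
      simp [mul_sub, sub_mul, hpp]
    calc ‖p - 1‖ = ‖(1 : H →L[ℂ] H) - p‖ := norm_sub_rev _ _
    _ ≤ 1 := proj_norm_le_one hsa hid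
  have hone : ‖(1 : H →L[ℂ] H)‖ ≤ 1 := by
    exact ContinuousLinearMap.norm_id_le (𝕜 := ℂ) (E := H)
  have hnu : ‖u‖ ≤ 1 := by
    have h : ‖u‖ * ‖u‖ = ‖u' * u‖ := (CStarRing.norm_star_mul_self (x := u)).symm
    rw [hu1] at h
    nlinarith [norm_nonneg u]
  have hnu' : ‖u'‖ ≤ 1 := by
    have h : ‖u'‖ * ‖u'‖ = ‖star u' * u'‖ := (CStarRing.norm_star_mul_self (x := u')).symm
    rw [hu', star_star, hu2] at h
    nlinarith [norm_nonneg u']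
  -- key identity
  have key : (p * v * p) * (p * u' * p * u * p) - (p * u' * p * u * p) * (p * v * p)
      = p * (u' * (p * (u * ((p - 1) * c)))) - p * (u' * (c * (u * p)))
        - p * (c * (u' * (p * (u * p)))) := by
    have hpp' : ∀ x : H →L[ℂ] H, p * (p * x) = p * x := by
      intro x; rw [← mul_assoc, hpp]
    have hc1 : ∀ x : H →L[ℂ] H, v * (u * x) = u * (v * x) := by
      intro x; rw [← mul_assoc, ← huv, mul_assoc]
    have hc2 : ∀ x : H →L[ℂ] H, v * (u' * x) = u' * (v * x) := by
      intro x; rw [← mul_assoc, ← h1, mul_assoc]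
    simp only [hc, mul_sub, sub_mul, mul_assoc, hpp, hpp', hc1, hc2, ← huv, ← h1,
      one_mul, mul_one]
    abel
  rw [key]
  have b1 : ‖p * (u' * (p * (u * ((p - 1) * c))))‖ ≤ t := by
    calc ‖p * (u' * (p * (u * ((p - 1) * c))))‖
        ≤ ‖u' * (p * (u * ((p - 1) * c)))‖ := norm_mul_le_of_le_one hnp
    _ ≤ ‖p * (u * ((p - 1) * c))‖ := norm_mul_le_of_le_one hnu'
    _ ≤ ‖u * ((p - 1) * c)‖ := norm_mul_le_of_le_one hnp
    _ ≤ ‖(p - 1) * c‖ := norm_mul_le_of_le_one hnu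
    _ ≤ ‖c‖ := norm_mul_le_of_le_one hnq
    _ ≤ t := hpv
  have hcu : ‖c * (u * p)‖ ≤ t := by
    calc ‖c * (u * p)‖ ≤ ‖c‖ * ‖u * p‖ := norm_mul_le _ _
    _ ≤ t * 1 := by
        apply mul_le_mul hpv _ (norm_nonneg _) ht
        calc ‖u * p‖ ≤ ‖p‖ := norm_mul_le_of_le_one hnu
        _ ≤ 1 := hnp
    _ = t := mul_one t
  have b2 : ‖p * (u' * (c * (u * p)))‖ ≤ t := by
    calc ‖p * (u' * (c * (u * p)))‖ ≤ ‖u' * (c * (u * p))‖ := norm_mul_le_of_le_one hnp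
    _ ≤ ‖c * (u * p)‖ := norm_mul_le_of_le_one hnu'
    _ ≤ t := hcu
  have b3 : ‖p * (c * (u' * (p * (u * p))))‖ ≤ t := by
    calc ‖p * (c * (u' * (p * (u * p))))‖ ≤ ‖c * (u' * (p * (u * p)))‖ :=
        norm_mul_le_of_le_one hnp
    _ ≤ ‖c‖ * ‖u' * (p * (u * p))‖ := norm_mul_le _ _
    _ ≤ t * 1 := by
        apply mul_le_mul hpv _ (norm_nonneg _) ht
        calc ‖u' * (p * (u * p))‖ ≤ ‖p * (u * p)‖ := norm_mul_le_of_le_one hnu'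
        _ ≤ ‖u * p‖ := norm_mul_le_of_le_one hnp
        _ ≤ ‖p‖ := norm_mul_le_of_le_one hnu
        _ ≤ 1 := hnp
    _ = t := mul_one t
  calc ‖p * (u' * (p * (u * ((p - 1) * c)))) - p * (u' * (c * (u * p)))
        - p * (c * (u' * (p * (u * p))))‖
      ≤ ‖p * (u' * (p * (u * ((p - 1) * c)))) - p * (u' * (c * (u * p)))‖
        + ‖p * (c * (u' * (p * (u * p))))‖ := norm_sub_le _ _
  _ ≤ (‖p * (u' * (p * (u * ((p - 1) * c))))‖ + ‖p * (u' * (c * (u * p)))‖)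
        + ‖p * (c * (u' * (p * (u * p))))‖ := by gcongr; exact norm_sub_le _ _
  _ ≤ (t + t) + t := by gcongr
  _ = 3 * t := by ring
end

section
/- For every δ > 0 there exists a constant C > 0 such that the following holds. Let H be a complex Hilbert space, let p and q be orthogonal projections on H with p·q = 0, let w be a partial isometry with w*·w = p and w·w* = q, let u and v be unitary operators on H with u·v = v·u, and let t > 0 satisfy ‖p·v − v·p‖ ≤ t. Define U = p·u·p + √(p − p·u·p·u*·p)·w* + w·√(p − p·u*·p·u·p) − w·(p·u*·p)·w* and V = p·v·p + w·v·w*. Then ‖U·V − V·U‖ ≤ C·t + δ. -/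
open Polynomial in
lemma sqrt_poly_approx (ε : ℝ) (hε : 0 < ε) :
    ∃ g : ℝ[X], g.coeff 0 = 0 ∧ ∀ r ∈ Set.Icc (0:ℝ) 1, |Real.sqrt r - g.eval r| ≤ ε := by
  obtain ⟨P, hP⟩ := exists_polynomial_near_of_continuousOn 0 1 Real.sqrt
    Real.continuous_sqrt.continuousOn (ε/2) (by positivity)
  refine ⟨P - C (P.eval 0), by simp [Polynomial.coeff_zero_eq_eval_zero], fun r hr => ?_⟩
  have h0 := hP 0 ⟨le_refl 0, zero_le_one⟩
  have hr' := hP r hr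
  have key : Real.sqrt r - (P - C (P.eval 0)).eval r
      = -(P.eval r - Real.sqrt r) + (P.eval 0 - Real.sqrt 0) := by
    simp [Real.sqrt_zero]; ring
  rw [key]
  calc |(-(P.eval r - Real.sqrt r)) + (P.eval 0 - Real.sqrt 0)|
      ≤ |(-(P.eval r - Real.sqrt r))| + |P.eval 0 - Real.sqrt 0| := abs_add_le _ _
    _ ≤ ε/2 + ε/2 := by rw [abs_neg]; exact add_le_add hr'.le h0.le
    _ = ε := by ring

lemma eq_zero_of_norm_le_forall {E : Type*} [NormedAddCommGroup E] {y : E}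
    (h : ∀ ε : ℝ, 0 < ε → ‖y‖ ≤ ε) : y = 0 := by
  rw [← norm_le_zero_iff]
  exact le_of_forall_pos_le_add (fun ε hε => by simpa using h ε hε)

lemma pow_comm_bound {A : Type*} [NormedRing A] (h1 : ‖(1:A)‖ ≤ 1) (x b : A) (hx : ‖x‖ ≤ 1) :
    ∀ n : ℕ, ‖x^n * b - b * x^n‖ ≤ n * ‖x*b - b*x‖ := by
  have hxn : ∀ n : ℕ, ‖x^n‖ ≤ 1 := by
    intro n
    induction n with
    | zero => simpa using h1
    | succ n ih =>
        rw [pow_succ]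
        calc ‖x^n * x‖ ≤ ‖x^n‖ * ‖x‖ := norm_mul_le _ _
          _ ≤ 1 * 1 := mul_le_mul ih hx (norm_nonneg _) zero_le_one
          _ = 1 := by ring
  intro n
  induction n with
  | zero => simp
  | succ n ih =>
      have id1 : x^(n+1)*b - b*x^(n+1) = x*(x^n*b - b*x^n) + (x*b - b*x)*x^n := by
        rw [pow_succ']
        noncomm_ring
      rw [id1]
      calc ‖x*(x^n*b - b*x^n) + (x*b - b*x)*x^n‖
          ≤ ‖x*(x^n*b - b*x^n)‖ + ‖(x*b - b*x)*x^n‖ := norm_add_le _ _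
        _ ≤ ‖x‖*‖x^n*b - b*x^n‖ + ‖x*b - b*x‖*‖x^n‖ := add_le_add (norm_mul_le _ _) (norm_mul_le _ _)
        _ ≤ 1*(n * ‖x*b - b*x‖) + ‖x*b - b*x‖*1 := by
            refine add_le_add (mul_le_mul hx ih (norm_nonneg _) zero_le_one)
              (mul_le_mul le_rfl (hxn n) (norm_nonneg _) (norm_nonneg _))
        _ = (n+1 : ℕ) * ‖x*b - b*x‖ := by push_cast; ring

open Polynomial in
lemma poly_comm_bound {A : Type*} [NormedRing A] [NormedAlgebra ℝ A] (h1 : ‖(1:A)‖ ≤ 1)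
    (g : ℝ[X]) (x b : A) (hx : ‖x‖ ≤ 1) :
    ‖(aeval x) g * b - b * (aeval x) g‖
      ≤ (∑ i ∈ Finset.range (g.natDegree+1), |g.coeff i| * i) * ‖x*b - b*x‖ := by
  rw [Polynomial.aeval_eq_sum_range]
  have expand : (∑ i ∈ Finset.range (g.natDegree+1), g.coeff i • x ^ i) * b
      - b * ∑ i ∈ Finset.range (g.natDegree+1), g.coeff i • x ^ i
      = ∑ i ∈ Finset.range (g.natDegree+1), g.coeff i • (x^i * b - b * x^i) := by
    rw [Finset.sum_mul, Finset.mul_sum, ← Finset.sum_sub_distrib]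
    congr 1
    ext i
    rw [smul_mul_assoc, mul_smul_comm, smul_sub]
  rw [expand]
  calc ‖∑ i ∈ Finset.range (g.natDegree+1), g.coeff i • (x^i * b - b * x^i)‖
      ≤ ∑ i ∈ Finset.range (g.natDegree+1), ‖g.coeff i • (x^i * b - b * x^i)‖ :=
        norm_sum_le _ _
    _ ≤ ∑ i ∈ Finset.range (g.natDegree+1), |g.coeff i| * i * ‖x*b - b*x‖ := by
        refine Finset.sum_le_sum fun i _ => ?_
        rw [norm_smul, Real.norm_eq_abs, mul_assoc]
        exact mul_le_mul_of_nonneg_left (pow_comm_bound h1 x b hx i) (abs_nonneg _)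
    _ = (∑ i ∈ Finset.range (g.natDegree+1), |g.coeff i| * i) * ‖x*b - b*x‖ := by
        rw [Finset.sum_mul]

lemma corner_comm_bound {A : Type*} [NormedRing A] (P U V : A)
    (hP : P * P = P) (hUV : U * V = V * U) (hP1 : ‖P‖ ≤ 1) (hU1 : ‖U‖ ≤ 1)
    {t : ℝ} (ht : ‖P*V - V*P‖ ≤ t) :
    ‖(P*U*P)*(P*V*P) - (P*V*P)*(P*U*P)‖ ≤ 3*t := by
  set D := P*V - V*P with hD
  have hd : P*V = V*P + D := by rw [hD]; abel
  have e1 : (P*U*P)*(P*V*P) = V*P*(U*P) + D*(U*P) + P*U*D*P := by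
    calc (P*U*P)*(P*V*P) = P*U*((P*P)*V)*P := by noncomm_ring
      _ = P*U*(P*V)*P := by rw [hP]
      _ = P*U*(V*P)*P + P*U*D*P := by rw [hd]; noncomm_ring
      _ = P*(U*V)*(P*P) + P*U*D*P := by noncomm_ring
      _ = P*(V*U)*(P*P) + P*U*D*P := by rw [hUV]
      _ = (P*V)*(U*P) + P*U*D*P := by rw [hP]; noncomm_ring
      _ = (V*P + D)*(U*P) + P*U*D*P := by rw [hd]
      _ = V*P*(U*P) + D*(U*P) + P*U*D*P := by noncomm_ring
  have e2 : (P*V*P)*(P*U*P) = V*P*(U*P) + D*(P*(U*P)) := by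
    calc (P*V*P)*(P*U*P) = (P*V)*((P*P)*(U*P)) := by noncomm_ring
      _ = (P*V)*(P*(U*P)) := by rw [hP]
      _ = (V*P + D)*(P*(U*P)) := by rw [hd]
      _ = V*((P*P)*(U*P)) + D*(P*(U*P)) := by noncomm_ring
      _ = V*(P*(U*P)) + D*(P*(U*P)) := by rw [hP]
      _ = V*P*(U*P) + D*(P*(U*P)) := by noncomm_ring
  have e3 : (P*U*P)*(P*V*P) - (P*V*P)*(P*U*P) = P*U*D*P + D*(U*P) - D*(P*(U*P)) := by
    rw [e1, e2]; abel
  have hDt : ‖D‖ ≤ t := ht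
  have ht0 : (0:ℝ) ≤ t := le_trans (norm_nonneg _) hDt
  have hUP : ‖U*P‖ ≤ 1 := le_trans (norm_mul_le _ _)
    (by nlinarith [norm_nonneg U, norm_nonneg P])
  have hPUP : ‖P*(U*P)‖ ≤ 1 := le_trans (norm_mul_le _ _)
    (by nlinarith [norm_nonneg P, norm_nonneg (U*P)])
  have b1 : ‖P*U*D*P‖ ≤ t := by
    calc ‖P*U*D*P‖ ≤ ‖P*U*D‖*‖P‖ := norm_mul_le _ _
      _ ≤ ‖P*U‖*‖D‖*‖P‖ :=
          mul_le_mul_of_nonneg_right (norm_mul_le _ _) (norm_nonneg _)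
      _ ≤ 1*t*1 := by
          have hPU : ‖P*U‖ ≤ 1 := le_trans (norm_mul_le _ _)
            (by nlinarith [norm_nonneg P, norm_nonneg U])
          exact mul_le_mul (mul_le_mul hPU hDt (norm_nonneg _) zero_le_one) hP1
            (norm_nonneg _) (by nlinarith)
      _ = t := by ring
  have b2 : ‖D*(U*P)‖ ≤ t := by
    calc ‖D*(U*P)‖ ≤ ‖D‖*‖U*P‖ := norm_mul_le _ _
      _ ≤ t*1 := mul_le_mul hDt hUP (norm_nonneg _) ht0
      _ = t := by ring
  have b3 : ‖D*(P*(U*P))‖ ≤ t := by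
    calc ‖D*(P*(U*P))‖ ≤ ‖D‖*‖P*(U*P)‖ := norm_mul_le _ _
      _ ≤ t*1 := mul_le_mul hDt hPUP (norm_nonneg _) ht0
      _ = t := by ring
  rw [e3]
  calc ‖P*U*D*P + D*(U*P) - D*(P*(U*P))‖
      ≤ ‖P*U*D*P + D*(U*P)‖ + ‖D*(P*(U*P))‖ := norm_sub_le _ _
    _ ≤ ‖P*U*D*P‖ + ‖D*(U*P)‖ + ‖D*(P*(U*P))‖ := by
        have := norm_add_le (P*U*D*P) (D*(U*P)); linarith
    _ ≤ 3*t := by linarith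

lemma key_alg {A : Type*} [Ring A] (a a' s s' b w w' P : A)
    (haw : a * w = 0) (hwa : w' * a = 0) (hbw : b * w = 0) (hwb : w' * b = 0)
    (hsw : s * w = 0) (hws : w' * s = 0) (hs'w : s' * w = 0) (hws' : w' * s' = 0)
    (hww : w' * w = P) (hPb : P * b = b) (hbP : b * P = b) :
    (a + s*w' + w*s' - w*a'*w') * (b + w*b*w') - (b + w*b*w') * (a + s*w' + w*s' - w*a'*w')
      = (a*b - b*a) + (s*b - b*s)*w' + w*(s'*b - b*s') + w*(b*a' - a'*b)*w' := by
  have H : ∀ y z : A, y * w = 0 → y * (w * z) = 0 := fun y z h => by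
    rw [← mul_assoc, h, zero_mul]
  have H' : ∀ y z : A, w' * y = 0 → w' * (y * z) = 0 := fun y z h => by
    rw [← mul_assoc, h, zero_mul]
  have HP : ∀ z : A, w' * (w * z) = P * z := fun z => by rw [← mul_assoc, hww]
  have HPb : ∀ z : A, P * (b * z) = b * z := fun z => by rw [← mul_assoc, hPb]
  have HbP : ∀ z : A, b * (P * z) = b * z := fun z => by rw [← mul_assoc, hbP]
  simp only [mul_add, add_mul, sub_mul, mul_sub, mul_assoc]
  simp only [H _ _ haw, H _ _ hbw, H _ _ hsw, H _ _ hs'w, H' _ _ hwa, H' _ _ hwb, H' _ _ hws,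
    H' _ _ hws', haw, hwa, hbw, hwb, hsw, hws, hs'w, hws', HP, HPb, HbP, hPb, hbP,
    mul_zero, zero_mul, add_zero, zero_add, sub_zero, zero_sub]
  abel

set_option maxHeartbeats 1000000 in
/-- For every `δ > 0` there is a constant `C > 0` such that for all complex Hilbert spaces `H`,
mutually orthogonal projections `p, q` with partial isometry `w` (`w*w = p`, `ww* = q`),
commuting unitaries `u, v`, and `t > 0` with `‖p·v − v·p‖ ≤ t`, the elements
`U = p·u·p + √(p − p·u·p·u*·p)·w* + w·√(p − p·u*·p·u·p) − w·(p·u*·p)·w*` and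
`V = p·v·p + w·v·w*` satisfy `‖U·V − V·U‖ ≤ C·t + δ`. -/
theorem almost_commuting_corner_bound (δ : ℝ) (hδ : 0 < δ) :
    ∃ C : ℝ, 0 < C ∧
      ∀ (H : Type) [NormedAddCommGroup H] [InnerProductSpace ℂ H] [CompleteSpace H]
        (u v p q w : H →L[ℂ] H),
        p * q = 0 →
        IsSelfAdjoint p → IsIdempotentElem p →
        IsSelfAdjoint q → IsIdempotentElem q →
        star w * w = p → w * star w = q →
        u ∈ unitary (H →L[ℂ] H) → v ∈ unitary (H →L[ℂ] H) →
        u * v = v * u →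
        ∀ t : ℝ, 0 < t → ‖p * v - v * p‖ ≤ t →
          let U : H →L[ℂ] H :=
            p * u * p + cfc Real.sqrt (p - p * u * p * star u * p) * star w
              + w * cfc Real.sqrt (p - p * star u * p * u * p) - w * (p * star u * p) * star w
          let V : H →L[ℂ] H := p * v * p + w * v * star w
          ‖U * V - V * U‖ ≤ C * t + δ := by
  obtain ⟨g, hg0, hgapprox⟩ := sqrt_poly_approx (δ/4) (by positivity)
  set L : ℝ := ∑ i ∈ Finset.range (g.natDegree+1), |g.coeff i| * i with hLdef
  have hL0 : 0 ≤ L :=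
    Finset.sum_nonneg fun i _ => mul_nonneg (abs_nonneg _) (Nat.cast_nonneg i)
  refine ⟨12*L + 7, by positivity, ?_⟩
  intro H _ _ _ u v p q w hpq hp hp2 hq hq2 hwwp hwwq hu hv huv t ht htv
  show ‖(p * u * p + cfc Real.sqrt (p - p * u * p * star u * p) * star w
      + w * cfc Real.sqrt (p - p * star u * p * u * p) - w * (p * star u * p) * star w)
      * (p * v * p + w * v * star w)
    - (p * v * p + w * v * star w)
      * (p * u * p + cfc Real.sqrt (p - p * u * p * star u * p) * star w
      + w * cfc Real.sqrt (p - p * star u * p * u * p) - w * (p * star u * p) * star w)‖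
    ≤ (12*L + 7) * t + δ
  set a := p*u*p with ha_def
  set a' := p*(star u)*p with ha'_def
  set b := p*v*p with hb_def
  set x := p - a*(star u)*p with hx_def
  set x' := p - a'*u*p with hx'_def
  set s := cfc Real.sqrt x with hs_def
  set s' := cfc Real.sqrt x' with hs'_def
  -- norm basics
  have h1le : ‖(1 : H →L[ℂ] H)‖ ≤ 1 := by
    rw [ContinuousLinearMap.one_def]; exact ContinuousLinearMap.norm_id_le
  have hpn : ‖p‖ ≤ 1 := by
    have h := CStarRing.norm_star_mul_self (x := p)
    rw [hp.star_eq, hp2] at h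
    nlinarith [norm_nonneg p]
  have hwn : ‖w‖ ≤ 1 := by
    have h := CStarRing.norm_star_mul_self (x := w)
    rw [hwwp] at h
    nlinarith [norm_nonneg w]
  have hwn' : ‖star w‖ ≤ 1 := by rw [norm_star]; exact hwn
  have hun : ‖u‖ ≤ 1 := by
    have h := CStarRing.norm_star_mul_self (x := u)
    rw [Unitary.star_mul_self_of_mem hu] at h
    nlinarith [norm_nonneg u]
  have hvn : ‖v‖ ≤ 1 := by
    have h := CStarRing.norm_star_mul_self (x := v)
    rw [Unitary.star_mul_self_of_mem hv] at h
    nlinarith [norm_nonneg v]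
  have hu'n : ‖star u‖ ≤ 1 := by rw [norm_star]; exact hun
  have mul3 : ∀ f g h : H →L[ℂ] H, ‖f‖ ≤ 1 → ‖g‖ ≤ 1 → ‖h‖ ≤ 1 → ‖f*g*h‖ ≤ 1 := by
    intro f g h hf hg hh
    calc ‖f*g*h‖ ≤ ‖f*g‖*‖h‖ := norm_mul_le _ _
      _ ≤ ‖f‖*‖g‖*‖h‖ := mul_le_mul_of_nonneg_right (norm_mul_le _ _) (norm_nonneg _)
      _ ≤ 1 := by
          have h1 : ‖f‖*‖g‖ ≤ 1*1 := mul_le_mul hf hg (norm_nonneg _) zero_le_one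
          have h2 : ‖f‖*‖g‖*‖h‖ ≤ 1*1 := mul_le_mul (by linarith) hh (norm_nonneg _) zero_le_one
          linarith
  have han : ‖a‖ ≤ 1 := by rw [ha_def]; exact mul3 p u p hpn hun hpn
  have ha'n : ‖a'‖ ≤ 1 := by rw [ha'_def]; exact mul3 p (star u) p hpn hu'n hpn
  have hbn : ‖b‖ ≤ 1 := by rw [hb_def]; exact mul3 p v p hpn hvn hpn
  -- multiplicative relations
  have hqp : q * p = 0 := by
    have h := congrArg star hpq
    rwa [star_mul, hp.star_eq, hq.star_eq, star_zero] at h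
  have hwp : w * p = w := by
    have h : star (w*p - w) * (w*p - w) = 0 := by
      have e : star (w*p - w) * (w*p - w)
          = p*(star w*w)*p - p*(star w*w) - (star w*w)*p + star w*w := by
        simp only [star_sub, star_mul, hp.star_eq]
        noncomm_ring
      rw [e, hwwp]
      have e2 : p*p*p = p := by rw [hp2, hp2]
      rw [e2, hp2]
      abel
    have := (CStarRing.star_mul_self_eq_zero_iff _).mp h
    exact sub_eq_zero.mp this
  have hpw' : p * star w = star w := by
    have h := congrArg star hwp
    rwa [star_mul, hp.star_eq] at h
  have hqw : q * w = w := by rw [← hwwq, mul_assoc, hwwp, hwp]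
  have hwq' : star w * q = star w := by
    have h := congrArg star hqw
    rwa [star_mul, hq.star_eq] at h
  -- corner relations
  have hpa : p*a = a := by
    rw [ha_def]
    calc p*(p*u*p) = (p*p)*u*p := by noncomm_ring
      _ = p*u*p := by rw [hp2]
  have hap : a*p = a := by
    rw [ha_def]
    calc (p*u*p)*p = p*u*(p*p) := by noncomm_ring
      _ = p*u*p := by rw [hp2]
  have hpa' : p*a' = a' := by
    rw [ha'_def]
    calc p*(p*(star u)*p) = (p*p)*(star u)*p := by noncomm_ring
      _ = p*(star u)*p := by rw [hp2]
  have ha'p : a'*p = a' := by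
    rw [ha'_def]
    calc (p*(star u)*p)*p = p*(star u)*(p*p) := by noncomm_ring
      _ = p*(star u)*p := by rw [hp2]
  have hpb : p*b = b := by
    rw [hb_def]
    calc p*(p*v*p) = (p*p)*v*p := by noncomm_ring
      _ = p*v*p := by rw [hp2]
  have hbp : b*p = b := by
    rw [hb_def]
    calc (p*v*p)*p = p*v*(p*p) := by noncomm_ring
      _ = p*v*p := by rw [hp2]
  -- star relations
  have hsa : star a = a' := by
    rw [ha_def, ha'_def]
    simp only [star_mul, hp.star_eq]
    noncomm_ring
  have hsa' : star a' = a := by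
    rw [ha_def, ha'_def]
    simp only [star_mul, hp.star_eq, star_star]
    noncomm_ring
  -- x as p - a*a'
  have haa'eq : a*a' = a*(star u)*p := by
    calc a*a' = (a*p)*(star u)*p := by rw [ha'_def]; noncomm_ring
      _ = a*(star u)*p := by rw [hap]
  have ha'aeq : a'*a = a'*u*p := by
    calc a'*a = (a'*p)*u*p := by rw [ha_def]; noncomm_ring
      _ = a'*u*p := by rw [ha'p]
  have hxa : x = p - a*a' := by rw [hx_def, haa'eq]
  have hx'a : x' = p - a'*a := by rw [hx'_def, ha'aeq]
  -- selfadjointness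
  have hx_sa : IsSelfAdjoint x := by
    rw [hxa]
    have : star (p - a*a') = p - a*a' := by
      rw [star_sub, star_mul, hsa, hsa', hp.star_eq]
    exact this
  have hx'_sa : IsSelfAdjoint x' := by
    rw [hx'a]
    have : star (p - a'*a) = p - a'*a := by
      rw [star_sub, star_mul, hsa, hsa', hp.star_eq]
    exact this
  -- order facts
  have hp_le_one : p ≤ (1 : H →L[ℂ] H) := by
    have h := star_mul_self_nonneg (1 - p : H →L[ℂ] H)
    have e : star (1 - p : H →L[ℂ] H) * (1 - p) = 1 - p - p + p*p := by
      rw [star_sub, star_one, hp.star_eq]; noncomm_ring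
    rw [e, hp2] at h
    have h' : (0 : H →L[ℂ] H) ≤ 1 - p := by
      have : (1 : H →L[ℂ] H) - p - p + p = 1 - p := by abel
      rwa [this] at h
    exact sub_nonneg.mp h'
  have haa'_le : a*a' ≤ p := by
    have h := star_right_conjugate_le_conjugate hp_le_one (p*u)
    have hL : (p*u)*p*star (p*u) = a*a' := by
      rw [star_mul, hp.star_eq, haa'eq, ha_def]
      noncomm_ring
    have hR : (p*u)*1*star (p*u) = p := by
      rw [star_mul, hp.star_eq]
      calc (p*u)*1*((star u)*p) = p*(u*star u)*p := by noncomm_ring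
        _ = p*1*p := by rw [Unitary.mul_star_self_of_mem hu]
        _ = p := by rw [mul_one, hp2]
    rwa [hL, hR] at h
  have ha'a_le : a'*a ≤ p := by
    have h := star_right_conjugate_le_conjugate hp_le_one (p*(star u))
    have hL : (p*(star u))*p*star (p*(star u)) = a'*a := by
      rw [star_mul, hp.star_eq, star_star, ha'aeq, ha'_def]
      noncomm_ring
    have hR : (p*(star u))*1*star (p*(star u)) = p := by
      rw [star_mul, hp.star_eq, star_star]
      calc (p*(star u))*1*(u*p) = p*((star u)*u)*p := by noncomm_ring
        _ = p*1*p := by rw [Unitary.star_mul_self_of_mem hu]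
        _ = p := by rw [mul_one, hp2]
    rwa [hL, hR] at h
  have hx_nonneg : 0 ≤ x := by rw [hxa]; exact sub_nonneg.mpr haa'_le
  have hx'_nonneg : 0 ≤ x' := by rw [hx'a]; exact sub_nonneg.mpr ha'a_le
  have hx_le_p : x ≤ p := by
    rw [hxa]
    have h : 0 ≤ a * a' := by
      have := mul_star_self_nonneg a
      rwa [hsa] at this
    exact sub_le_self _ h
  have hx'_le_p : x' ≤ p := by
    rw [hx'a]
    have h : 0 ≤ a' * a := by
      have := mul_star_self_nonneg a'
      rwa [hsa'] at this
    exact sub_le_self _ h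
  have hx_norm : ‖x‖ ≤ 1 :=
    le_trans (CStarAlgebra.norm_le_norm_of_nonneg_of_le hx_nonneg hx_le_p) hpn
  have hx'_norm : ‖x'‖ ≤ 1 :=
    le_trans (CStarAlgebra.norm_le_norm_of_nonneg_of_le hx'_nonneg hx'_le_p) hpn
  have hx_spec : spectrum ℝ x ⊆ Set.Icc 0 1 := by
    intro r hr
    refine ⟨spectrum_nonneg_of_nonneg hx_nonneg hr, ?_⟩
    have h2 := spectrum.norm_le_norm_mul_of_mem hr
    rw [Real.norm_eq_abs] at h2
    calc r ≤ |r| := le_abs_self r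
      _ ≤ ‖x‖ * ‖(1 : H →L[ℂ] H)‖ := h2
      _ ≤ 1 := by
          have := mul_le_mul hx_norm h1le (norm_nonneg _) zero_le_one
          linarith
  have hx'_spec : spectrum ℝ x' ⊆ Set.Icc 0 1 := by
    intro r hr
    refine ⟨spectrum_nonneg_of_nonneg hx'_nonneg hr, ?_⟩
    have h2 := spectrum.norm_le_norm_mul_of_mem hr
    rw [Real.norm_eq_abs] at h2
    calc r ≤ |r| := le_abs_self r
      _ ≤ ‖x'‖ * ‖(1 : H →L[ℂ] H)‖ := h2
      _ ≤ 1 := by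
          have := mul_le_mul hx'_norm h1le (norm_nonneg _) zero_le_one
          linarith
  -- cfc approximation
  have approx : ∀ y : H →L[ℂ] H, IsSelfAdjoint y → spectrum ℝ y ⊆ Set.Icc 0 1 →
      ∀ (e : ℝ) (gg : Polynomial ℝ), 0 ≤ e →
      (∀ r ∈ Set.Icc (0:ℝ) 1, |Real.sqrt r - gg.eval r| ≤ e) →
      ‖cfc Real.sqrt y - (Polynomial.aeval y) gg‖ ≤ e := by
    intro y hy hspec e gg he happ
    have h1 : cfc Real.sqrt y - (Polynomial.aeval y) gg
        = cfc (fun r => Real.sqrt r - Polynomial.eval r gg) y := by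
      rw [cfc_sub Real.sqrt (fun r => Polynomial.eval r gg) y
        Real.continuous_sqrt.continuousOn (gg.continuous.continuousOn),
        cfc_polynomial gg y hy]
    rw [h1]
    exact norm_cfc_le he fun r hr => by
      rw [Real.norm_eq_abs]; exact happ r (hspec hr)
  -- corner facts about x
  have hpx : p*x = x := by
    rw [hxa, mul_sub, hp2]
    congr 1
    calc p*(a*a') = (p*a)*a' := by noncomm_ring
      _ = a*a' := by rw [hpa]
  have hpx' : p*x' = x' := by
    rw [hx'a, mul_sub, hp2]
    congr 1
    calc p*(a'*a) = (p*a')*a := by noncomm_ring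
      _ = a'*a := by rw [hpa']
  -- corner facts about s and s'
  have corner_s : ∀ y : H →L[ℂ] H, IsSelfAdjoint y → spectrum ℝ y ⊆ Set.Icc 0 1 →
      p*y = y → p * cfc Real.sqrt y = cfc Real.sqrt y := by
    intro y hy hspec hpy
    have key : ∀ ε' : ℝ, 0 < ε' → ‖p * cfc Real.sqrt y - cfc Real.sqrt y‖ ≤ ε' := by
      intro ε' hε'
      obtain ⟨gg, hgg0, hggapp⟩ := sqrt_poly_approx (ε'/3) (by positivity)
      set G := (Polynomial.aeval y) gg with hG
      have hGnorm : ‖cfc Real.sqrt y - G‖ ≤ ε'/3 :=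
        approx y hy hspec (ε'/3) gg (by positivity) hggapp
      obtain ⟨g₂, hg₂⟩ := (Polynomial.X_dvd_iff).mpr hgg0
      have hpG : p * G = G := by
        rw [hG, hg₂, map_mul, Polynomial.aeval_X, ← mul_assoc, hpy]
      have hid : p * cfc Real.sqrt y - cfc Real.sqrt y
          = p*(cfc Real.sqrt y - G) - (cfc Real.sqrt y - G) + (p*G - G) := by
        rw [mul_sub]; abel
      rw [hid, hpG, sub_self, add_zero]
      calc ‖p*(cfc Real.sqrt y - G) - (cfc Real.sqrt y - G)‖
          ≤ ‖p*(cfc Real.sqrt y - G)‖ + ‖cfc Real.sqrt y - G‖ := norm_sub_le _ _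
        _ ≤ ‖p‖*‖cfc Real.sqrt y - G‖ + ‖cfc Real.sqrt y - G‖ :=
            add_le_add (norm_mul_le _ _) le_rfl
        _ ≤ 1*(ε'/3) + ε'/3 := by
            refine add_le_add (mul_le_mul hpn hGnorm (norm_nonneg _) zero_le_one) hGnorm
        _ ≤ ε' := by linarith
    exact sub_eq_zero.mp (eq_zero_of_norm_le_forall key)
  have hps : p * s = s := by rw [hs_def]; exact corner_s x hx_sa hx_spec hpx
  have hps' : p * s' = s' := by rw [hs'_def]; exact corner_s x' hx'_sa hx'_spec hpx'
  have hs_sa : IsSelfAdjoint s := by rw [hs_def]; exact cfc_predicate _ _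
  have hs'_sa : IsSelfAdjoint s' := by rw [hs'_def]; exact cfc_predicate _ _
  -- zero products
  have hqs : q*s = 0 := by rw [← hps, ← mul_assoc, hqp, zero_mul]
  have hsq : s*q = 0 := by
    have h := congrArg star hqs
    rwa [star_mul, hs_sa.star_eq, hq.star_eq, star_zero] at h
  have hws0 : star w * s = 0 := by rw [← hwq', mul_assoc, hqs, mul_zero]
  have hsw0 : s * w = 0 := by rw [← hqw, ← mul_assoc, hsq, zero_mul]
  have hqs' : q*s' = 0 := by rw [← hps', ← mul_assoc, hqp, zero_mul]
  have hs'q : s'*q = 0 := by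
    have h := congrArg star hqs'
    rwa [star_mul, hs'_sa.star_eq, hq.star_eq, star_zero] at h
  have hws'0 : star w * s' = 0 := by rw [← hwq', mul_assoc, hqs', mul_zero]
  have hs'w0 : s' * w = 0 := by rw [← hqw, ← mul_assoc, hs'q, zero_mul]
  have haq : a*q = 0 := by
    rw [ha_def]
    calc (p*u*p)*q = (p*u)*(p*q) := by noncomm_ring
      _ = 0 := by rw [hpq, mul_zero]
  have hqa : q*a = 0 := by
    rw [ha_def]
    calc q*(p*u*p) = (q*p)*(u*p) := by noncomm_ring
      _ = 0 := by rw [hqp, zero_mul]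
  have haw0 : a*w = 0 := by rw [← hqw, ← mul_assoc, haq, zero_mul]
  have hwa0 : star w * a = 0 := by rw [← hwq', mul_assoc, hqa, mul_zero]
  have hbq : b*q = 0 := by
    rw [hb_def]
    calc (p*v*p)*q = (p*v)*(p*q) := by noncomm_ring
      _ = 0 := by rw [hpq, mul_zero]
  have hqb : q*b = 0 := by
    rw [hb_def]
    calc q*(p*v*p) = (q*p)*(v*p) := by noncomm_ring
      _ = 0 := by rw [hqp, zero_mul]
  have hbw0 : b*w = 0 := by rw [← hqw, ← mul_assoc, hbq, zero_mul]
  have hwb0 : star w * b = 0 := by rw [← hwq', mul_assoc, hqb, mul_zero]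
  -- commutator bounds
  have hab : ‖a*b - b*a‖ ≤ 3*t := by
    rw [ha_def, hb_def]
    exact corner_comm_bound p u v hp2 huv hpn hun htv
  have hu'v : (star u) * v = v * (star u) := by
    have e1 : star u * (u*v) * star u = v * star u := by
      calc star u * (u*v) * star u = (star u * u) * (v * star u) := by noncomm_ring
        _ = 1 * (v*star u) := by rw [Unitary.star_mul_self_of_mem hu]
        _ = v*star u := one_mul _
    have e2 : star u * (v*u) * star u = star u * v := by
      calc star u * (v*u) * star u = (star u * v) * (u * star u) := by noncomm_ring
        _ = (star u * v) * 1 := by rw [Unitary.mul_star_self_of_mem hu]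
        _ = star u * v := mul_one _
    have : v * star u = star u * v := by rw [← e1, huv, e2]
    exact this.symm
  have ha'b : ‖a'*b - b*a'‖ ≤ 3*t := by
    rw [ha'_def, hb_def]
    exact corner_comm_bound p (star u) v hp2 hu'v hpn hu'n htv
  have hxb : ‖x*b - b*x‖ ≤ 6*t := by
    have hid : x*b - b*x = -(a*(a'*b - b*a') + (a*b - b*a)*a') := by
      rw [hxa, sub_mul, mul_sub, hpb, hbp]
      noncomm_ring
    rw [hid, norm_neg]
    have t0 : (0:ℝ) ≤ 3*t := by linarith
    calc ‖a*(a'*b - b*a') + (a*b - b*a)*a'‖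
        ≤ ‖a*(a'*b - b*a')‖ + ‖(a*b - b*a)*a'‖ := norm_add_le _ _
      _ ≤ ‖a‖*‖a'*b - b*a'‖ + ‖a*b - b*a‖*‖a'‖ :=
          add_le_add (norm_mul_le _ _) (norm_mul_le _ _)
      _ ≤ 1*(3*t) + (3*t)*1 := add_le_add
          (mul_le_mul han ha'b (norm_nonneg _) zero_le_one)
          (mul_le_mul hab ha'n (norm_nonneg _) t0)
      _ = 6*t := by ring
  have hx'b : ‖x'*b - b*x'‖ ≤ 6*t := by
    have hid : x'*b - b*x' = -(a'*(a*b - b*a) + (a'*b - b*a')*a) := by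
      rw [hx'a, sub_mul, mul_sub, hpb, hbp]
      noncomm_ring
    rw [hid, norm_neg]
    have t0 : (0:ℝ) ≤ 3*t := by linarith
    calc ‖a'*(a*b - b*a) + (a'*b - b*a')*a‖
        ≤ ‖a'*(a*b - b*a)‖ + ‖(a'*b - b*a')*a‖ := norm_add_le _ _
      _ ≤ ‖a'‖*‖a*b - b*a‖ + ‖a'*b - b*a'‖*‖a‖ :=
          add_le_add (norm_mul_le _ _) (norm_mul_le _ _)
      _ ≤ 1*(3*t) + (3*t)*1 := add_le_add
          (mul_le_mul ha'n hab (norm_nonneg _) zero_le_one)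
          (mul_le_mul ha'b han (norm_nonneg _) t0)
      _ = 6*t := by ring
  -- sqrt commutator bounds
  have sqrt_comm : ∀ y : H →L[ℂ] H, IsSelfAdjoint y → spectrum ℝ y ⊆ Set.Icc 0 1 →
      ‖y‖ ≤ 1 → ‖y*b - b*y‖ ≤ 6*t →
      ‖cfc Real.sqrt y * b - b * cfc Real.sqrt y‖ ≤ 2*(δ/4) + L*(6*t) := by
    intro y hy hspec hyn hyb
    set G := (Polynomial.aeval y) g with hG
    have hGap : ‖cfc Real.sqrt y - G‖ ≤ δ/4 :=
      approx y hy hspec (δ/4) g (by positivity) hgapprox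
    have hid : cfc Real.sqrt y * b - b * cfc Real.sqrt y
        = (cfc Real.sqrt y - G)*b - b*(cfc Real.sqrt y - G) + (G*b - b*G) := by
      noncomm_ring
    have hGb : ‖G*b - b*G‖ ≤ L*(6*t) := by
      have h := poly_comm_bound h1le g y b hyn
      rw [← hLdef] at h
      exact le_trans h (mul_le_mul_of_nonneg_left hyb hL0)
    rw [hid]
    calc ‖(cfc Real.sqrt y - G)*b - b*(cfc Real.sqrt y - G) + (G*b - b*G)‖
        ≤ ‖(cfc Real.sqrt y - G)*b - b*(cfc Real.sqrt y - G)‖ + ‖G*b - b*G‖ := norm_add_le _ _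
      _ ≤ ‖(cfc Real.sqrt y - G)*b‖ + ‖b*(cfc Real.sqrt y - G)‖ + ‖G*b - b*G‖ := by
          have := norm_sub_le ((cfc Real.sqrt y - G)*b) (b*(cfc Real.sqrt y - G))
          linarith
      _ ≤ ‖cfc Real.sqrt y - G‖*‖b‖ + ‖b‖*‖cfc Real.sqrt y - G‖ + ‖G*b - b*G‖ := by
          have h1 := norm_mul_le (cfc Real.sqrt y - G) b
          have h2 := norm_mul_le b (cfc Real.sqrt y - G)
          linarith
      _ ≤ (δ/4)*1 + 1*(δ/4) + L*(6*t) := by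
          refine add_le_add (add_le_add
            (mul_le_mul hGap hbn (norm_nonneg _) (by positivity))
            (mul_le_mul hbn hGap (norm_nonneg _) zero_le_one)) hGb
      _ = 2*(δ/4) + L*(6*t) := by ring
  have hsb : ‖s*b - b*s‖ ≤ 2*(δ/4) + L*(6*t) := by
    rw [hs_def]; exact sqrt_comm x hx_sa hx_spec hx_norm hxb
  have hs'b : ‖s'*b - b*s'‖ ≤ 2*(δ/4) + L*(6*t) := by
    rw [hs'_def]; exact sqrt_comm x' hx'_sa hx'_spec hx'_norm hx'b
  -- main identity
  have hbigVeq : w*b*star w = w*v*star w := by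
    rw [hb_def]
    calc w*(p*v*p)*star w = (w*p)*v*(p*star w) := by noncomm_ring
      _ = w*v*star w := by rw [hwp, hpw']
  have hkey := key_alg a a' s s' b w (star w) p haw0 hwa0 hbw0 hwb0 hsw0 hws0 hs'w0 hws'0
    hwwp hpb hbp
  rw [← hbigVeq, hkey]
  -- final numeric assembly
  have n1 : ‖(s*b - b*s)*star w‖ ≤ 2*(δ/4) + L*(6*t) := by
    calc ‖(s*b - b*s)*star w‖ ≤ ‖s*b - b*s‖*‖star w‖ := norm_mul_le _ _
      _ ≤ ‖s*b - b*s‖ := mul_le_of_le_one_right (norm_nonneg _) hwn'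
      _ ≤ 2*(δ/4) + L*(6*t) := hsb
  have n2 : ‖w*(s'*b - b*s')‖ ≤ 2*(δ/4) + L*(6*t) := by
    calc ‖w*(s'*b - b*s')‖ ≤ ‖w‖*‖s'*b - b*s'‖ := norm_mul_le _ _
      _ ≤ ‖s'*b - b*s'‖ := mul_le_of_le_one_left (norm_nonneg _) hwn
      _ ≤ 2*(δ/4) + L*(6*t) := hs'b
  have n3 : ‖w*(b*a' - a'*b)*star w‖ ≤ 3*t := by
    calc ‖w*(b*a' - a'*b)*star w‖ ≤ ‖w*(b*a' - a'*b)‖*‖star w‖ := norm_mul_le _ _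
      _ ≤ ‖w*(b*a' - a'*b)‖ := mul_le_of_le_one_right (norm_nonneg _) hwn'
      _ ≤ ‖w‖*‖b*a' - a'*b‖ := norm_mul_le _ _
      _ ≤ ‖b*a' - a'*b‖ := mul_le_of_le_one_left (norm_nonneg _) hwn
      _ = ‖a'*b - b*a'‖ := norm_sub_rev _ _
      _ ≤ 3*t := ha'b
  calc ‖(a*b - b*a) + (s*b - b*s)*star w + w*(s'*b - b*s') + w*(b*a' - a'*b)*star w‖
      ≤ ‖(a*b - b*a) + (s*b - b*s)*star w + w*(s'*b - b*s')‖
        + ‖w*(b*a' - a'*b)*star w‖ := norm_add_le _ _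
    _ ≤ ‖(a*b - b*a) + (s*b - b*s)*star w‖ + ‖w*(s'*b - b*s')‖
        + ‖w*(b*a' - a'*b)*star w‖ := by
        have := norm_add_le ((a*b - b*a) + (s*b - b*s)*star w) (w*(s'*b - b*s'))
        linarith
    _ ≤ ‖a*b - b*a‖ + ‖(s*b - b*s)*star w‖ + ‖w*(s'*b - b*s')‖
        + ‖w*(b*a' - a'*b)*star w‖ := by
        have := norm_add_le (a*b - b*a) ((s*b - b*s)*star w)
        linarith
    _ ≤ 3*t + (2*(δ/4) + L*(6*t)) + (2*(δ/4) + L*(6*t)) + 3*t := by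
        have := hab; linarith
    _ ≤ (12*L + 7)*t + δ := by nlinarith
end

section
/- Let n ≥ 1 and let F be the free group on generators g_1, …, g_n. For each permutation σ of {1, …, n}, let α(σ) be the automorphism of F determined by α(σ)(g_i) = g_{σ(i)}. Let g = (g_1·g_2·⋯·g_n)^3. Then for every m ≥ 1, all integers k_1, …, k_m with k_i ≠ 0 for each i, and all permutations β_0, β_1, …, β_{m−1} of {1, …, n} with β_0 = identity and β_{i−1} ≠ β_i for 1 ≤ i ≤ m−1, the element (α(β_0)(g))^{k_1}·(α(β_1)(g))^{k_2}·⋯·(α(β_{m−1})(g))^{k_m} is not equal to the identity of F. -/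
/-- The homomorphism `α` from `Equiv.Perm (Fin n)` into the automorphism group of
`FreeGroup (Fin n)` determined by `α(σ)(gᵢ) = g_{σ(i)}`. -/
def permAut (n : ℕ) : Equiv.Perm (Fin n) →* MulAut (FreeGroup (Fin n)) where
  toFun σ := FreeGroup.freeGroupCongr σ
  map_one' := FreeGroup.freeGroupCongr_refl
  map_mul' σ τ := (FreeGroup.freeGroupCongr_trans τ σ).symm

/-- `g = (g₁ · g₂ · ⋯ · gₙ)³` in the free group on `g₁, …, gₙ`. -/
def gWord (n : ℕ) : FreeGroup (Fin n) :=
  ((List.ofFn fun i : Fin n => FreeGroup.of i).prod) ^ 3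

namespace GW
open FreeGroup List

variable {α : Type*} [DecidableEq α]

set_option linter.unusedSectionVars false

/-- The no-cancellation relation between adjacent letters of a reduced word. -/
def R : α × Bool → α × Bool → Prop := fun x y => ¬(x.1 = y.1 ∧ x.2 = !y.2)

lemma chain'_of_reduce {L : List (α × Bool)} (h : reduce L = L) : L.Chain' R := by
  induction L with
  | nil => exact List.isChain_nil
  | cons x L ih =>
    rw [reduce.cons] at h
    rcases hL : reduce L with - | ⟨y, t⟩
    · rw [hL] at h
      simp only [] at h
      cases h
      exact List.isChain_singleton _
    · rw [hL] at h
      simp only [] at h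
      split_ifs at h with hc
      · exfalso
        have h1 : (reduce L).length ≤ L.length := (Red.sublist (reduce.red)).length_le
        rw [hL] at h1
        have h2 : t.length = L.length + 1 := by
          have := congrArg List.length h
          simpa using this
        simp at h1
        omega
      · cases h
        exact List.isChain_cons_cons.2 ⟨hc, ih hL⟩

lemma reduce_of_chain' {L : List (α × Bool)} (h : L.Chain' R) : reduce L = L := by
  induction L with
  | nil => rfl
  | cons x L ih =>
    have hL : reduce L = L := ih h.tail
    rw [reduce.cons, hL]
    cases L with
    | nil => rfl
    | cons y t =>
      have hxy : R x y := (List.isChain_cons_cons.1 h).1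
      simp only []
      rw [if_neg hxy]

/-- The key cancellation lemma: multiplying two reduced words cancels a common part `c`
and concatenates the rest. -/
lemma reduce_append : ∀ (l₂ l₁ : List (α × Bool)), l₁.Chain' R → l₂.Chain' R →
    ∃ c, c ≤ l₁.length ∧ c ≤ l₂.length ∧
      reduce (l₁ ++ l₂) = l₁.take (l₁.length - c) ++ l₂.drop c ∧
      l₂.take c = invRev (l₁.drop (l₁.length - c))
  | [], l₁, h₁, _ => ⟨0, by simp, by simp, by simpa using reduce_of_chain' h₁, by simp [invRev]⟩
  | y :: t, l₁, h₁, h₂ => by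
    rcases l₁.eq_nil_or_concat with rfl | ⟨l, x, hlx⟩
    · exact ⟨0, by simp, by simp, by simpa using reduce_of_chain' h₂, by simp [invRev]⟩
    subst hlx
    rw [List.concat_eq_append] at *
    by_cases hc : x.1 = y.1 ∧ x.2 = !y.2
    · -- cancellation of x against y
      have hl : l.Chain' R := (List.isChain_append.1 h₁).1
      obtain ⟨c, hc1, hc2, hr, hinv⟩ := reduce_append t l hl h₂.tail
      have hy : y = (x.1, !x.2) := by
        obtain ⟨h1, h2⟩ := hc
        cases y; cases x
        simp_all
      have hstep : reduce ((l ++ [x]) ++ y :: t) = reduce (l ++ t) := by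
        have : Red.Step ((l ++ [x]) ++ y :: t) (l ++ t) := by
          rw [hy]
          have : (l ++ [x]) ++ (x.1, !x.2) :: t = l ++ (x.1, x.2) :: (x.1, !x.2) :: t := by
            simp
          rw [this]
          exact Red.Step.not
        exact reduce.Step.eq this
      refine ⟨c + 1, by simp; omega, by simp; omega, ?_, ?_⟩
      · rw [hstep, hr]
        have hlen : (l ++ [x]).length - (c + 1) = l.length - c := by simp
        rw [hlen, List.take_append_of_le_length (by omega), List.drop_succ_cons]
      · have hlen : (l ++ [x]).length - (c + 1) = l.length - c := by simp
        rw [hlen, List.drop_append_of_le_length (by omega)]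
        have : invRev (l.drop (l.length - c) ++ [x]) = y :: invRev (l.drop (l.length - c)) := by
          rw [hy]
          simp [invRev]
        rw [this, ← hinv]
        simp
    · -- no cancellation: the concatenation is reduced
      refine ⟨0, Nat.zero_le _, Nat.zero_le _, ?_, by simp [invRev]⟩
      simp only [Nat.sub_zero, List.take_length, List.drop_zero]
      apply reduce_of_chain'
      refine h₁.append h₂ ?_
      intro a ha b hb
      simp at ha hb
      subst ha; subst hb
      exact hc

lemma invRev_drop (u : List (α × Bool)) (kk : ℕ) :
    invRev (u.drop kk) = (invRev u).take (u.length - kk) := by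
  have : (List.map (fun g : α × Bool => (g.1, !g.2)) (u.drop kk)).reverse =
      ((List.map (fun g : α × Bool => (g.1, !g.2)) u).reverse).take (u.length - kk) := by
    rw [List.map_drop, List.reverse_drop, List.length_map]
  simpa [invRev] using this

/-- If `u` is a reduced word of length at least `2 nn` and the reduced word of `w` does not
begin with the first `nn` letters of `u⁻¹`, then the reduced word of `(mk u) * w` begins
with the first `nn` letters of `u`. -/
lemma toWord_mul_prefix {u : List (α × Bool)} (hu : u.Chain' R) {nn : ℕ}
    (hlen : 2 * nn ≤ u.length) (w : FreeGroup α)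
    (hw : (toWord w).take nn ≠ (invRev u).take nn) :
    (toWord (mk u * w)).take nn = u.take nn := by
  have hred : toWord (mk u * w) = reduce (u ++ toWord w) := by
    conv_lhs => rw [← mk_toWord (x := w)]
    rw [mul_mk, toWord_mk]
  obtain ⟨c, h1, h2, hr, hinv⟩ :=
    reduce_append (toWord w) u hu (chain'_of_reduce (reduce_toWord w))
  by_cases hcn : nn ≤ c
  · exfalso
    apply hw
    have e1 : (toWord w).take nn = ((toWord w).take c).take nn := by
      rw [List.take_take, Nat.min_eq_left hcn]
    rw [e1, hinv, invRev_drop]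
    have e2 : u.length - (u.length - c) = c := by omega
    rw [e2, List.take_take, Nat.min_eq_left hcn]
  · push_neg at hcn
    rw [hred, hr]
    have h3 : nn ≤ u.length - c := by omega
    rw [List.take_append_of_le_length, List.take_take, Nat.min_eq_left h3]
    rw [List.length_take]
    omega

/-- The reduced word of `of b ^ kk`. -/
def blockWord (b : α) (kk : ℤ) : List (α × Bool) :=
  List.replicate kk.natAbs (b, decide (0 < kk))

lemma of_zpow_eq_mk (b : α) (kk : ℤ) : of b ^ kk = mk (blockWord b kk) := by
  rcases lt_trichotomy kk 0 with h | h | h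
  · obtain ⟨j, rfl⟩ : ∃ j : ℕ, kk = -(j : ℤ) := ⟨kk.natAbs, by omega⟩
    have : of b ^ (-(j:ℤ)) = (of b ^ j)⁻¹ := by
      rw [zpow_neg, zpow_natCast]
    rw [this, ← mk_toWord (x := of b ^ j), toWord_of_pow, inv_mk]
    unfold blockWord
    congr 1
    simp [invRev, List.reverse_replicate, decide_eq_false (by omega : ¬ (0:ℤ) < -(j:ℤ))]
  · subst h; simp [blockWord, ← one_eq_mk]
  · obtain ⟨j, rfl⟩ : ∃ j : ℕ, kk = (j : ℤ) := ⟨kk.natAbs, by omega⟩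
    rw [zpow_natCast, ← mk_toWord (x := of b ^ j), toWord_of_pow]
    unfold blockWord
    congr 1
    simp [decide_eq_true (by exact_mod_cast h : (0:ℤ) < (j:ℤ))]
    omega

lemma prod_mk (L : List (List (α × Bool))) : (L.map mk).prod = mk L.flatten := by
  induction L with
  | nil => simp [← one_eq_mk]
  | cons x L ih => simp [ih, mul_mk]

/-- A nonempty product of nonzero powers of distinct-adjacent generators is nontrivial. -/
lemma prod_zpow_ne_one {m : ℕ} (hm : 1 ≤ m) (k : Fin m → ℤ) (hk : ∀ i, k i ≠ 0)
    (b : Fin m → α) (hb : ∀ (i : ℕ) (h : i + 1 < m),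
      b ⟨i, Nat.lt_of_succ_lt h⟩ ≠ b ⟨i + 1, h⟩) :
    (List.ofFn fun i => of (b i) ^ k i).prod ≠ 1 := by
  have hofn : (List.ofFn fun i => of (b i) ^ k i) =
      (List.ofFn fun i => blockWord (b i) (k i)).map mk := by
    rw [List.map_ofFn]
    congr 1
    funext i
    exact of_zpow_eq_mk _ _
  rw [hofn, prod_mk]
  set BL := List.ofFn fun i => blockWord (b i) (k i) with hBL
  have hne : [] ∉ BL := by
    intro hmem
    rw [hBL, List.mem_ofFn] at hmem
    obtain ⟨i, hi⟩ := hmem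
    have := congrArg List.length hi
    simp [blockWord] at this
    exact hk i (by omega)
  have hchain : BL.flatten.Chain' R := by
    rw [show BL.flatten.Chain' R ↔ BL.flatten.IsChain R from Iff.rfl, List.isChain_flatten hne]
    constructor
    · intro l hl
      rw [hBL, List.mem_ofFn] at hl
      obtain ⟨i, rfl⟩ := hl
      unfold blockWord
      apply List.isChain_replicate_of_rel
      intro h
      simp [R] at h
    · rw [hBL]
      rw [List.isChain_iff_getElem]
      intro i hi
      simp only [List.length_ofFn] at hi
      intro x hx y hy
      simp only [List.getElem_ofFn] at hx hy
      have hxm := List.mem_of_mem_getLast? hx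
      have hym := List.mem_of_mem_head? hy
      simp only [blockWord] at hxm hym
      have hx1 := List.eq_of_mem_replicate hxm
      have hy1 := List.eq_of_mem_replicate hym
      subst hx1; subst hy1
      intro hcon
      exact hb i (by omega) (by simpa using hcon.1)
  intro hone
  have : toWord (mk BL.flatten) = [] := by rw [hone, toWord_one]
  rw [toWord_mk, reduce_of_chain' hchain] at this
  rw [List.flatten_eq_nil_iff] at this
  have h0 : blockWord (b ⟨0, hm⟩) (k ⟨0, hm⟩) ∈ BL := by
    rw [hBL, List.mem_ofFn]
    exact ⟨⟨0, hm⟩, rfl⟩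
  exact hne (this _ h0 ▸ h0)

lemma invRev_append (l₁ l₂ : List (α × Bool)) :
    invRev (l₁ ++ l₂) = invRev l₂ ++ invRev l₁ := by
  simp [invRev]

lemma chain'_of_const_bool {bb : Bool} {L : List (α × Bool)} (h : ∀ x ∈ L, x.2 = bb) :
    L.Chain' R := by
  induction L with
  | nil => exact List.isChain_nil
  | cons x L ih =>
    rw [show (x :: L).Chain' R ↔ (x :: L).IsChain R from Iff.rfl, List.isChain_cons]
    refine ⟨?_, ih fun y hy => h y (List.mem_cons_of_mem _ hy)⟩
    intro y hy
    have hyL : y ∈ L := List.mem_of_mem_head? hy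
    have h1 : x.2 = bb := h x List.mem_cons_self
    have h2 : y.2 = bb := h y (List.mem_cons_of_mem _ hyL)
    intro hcon
    rw [h1, h2] at hcon
    simp at hcon

lemma prod_map_of {β : Type*} (l : List β) (g : β → α) :
    (l.map fun i => of (g i)).prod = mk (l.map fun i => ((g i : α), true)) := by
  induction l with
  | nil => simp [← one_eq_mk]
  | cons x l ih =>
    simp only [List.map_cons, List.prod_cons, ih]
    rw [show of (g x) = mk [(g x, true)] from rfl, mul_mk]
    rfl

end GW

section Main
open FreeGroup List GW

variable {n : ℕ}

/-- the positive word `g_{σ 0} ⋯ g_{σ (n-1)}` -/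
def PW (σ : Equiv.Perm (Fin n)) : List (Fin n × Bool) := List.ofFn fun i => ((σ i : Fin n), true)

/-- the reduced word of `α(σ)(g)` -/
def W3 (σ : Equiv.Perm (Fin n)) : List (Fin n × Bool) := (PW σ ++ PW σ) ++ PW σ

lemma PW_snd {σ : Equiv.Perm (Fin n)} : ∀ x ∈ PW σ, x.2 = true := by
  intro x hx
  rw [PW, List.mem_ofFn] at hx
  obtain ⟨i, rfl⟩ := hx
  rfl

lemma PW_length (σ : Equiv.Perm (Fin n)) : (PW σ).length = n := by simp [PW]

lemma W3_chain (σ : Equiv.Perm (Fin n)) : (W3 σ).Chain' R := by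
  apply chain'_of_const_bool (bb := true)
  intro x hx
  rw [W3] at hx
  simp only [List.mem_append] at hx
  rcases hx with (h | h) | h <;> exact PW_snd x h

lemma W3_length (σ : Equiv.Perm (Fin n)) : (W3 σ).length = 3 * n := by
  simp [W3, PW]; ring

lemma permAut_gWord (σ : Equiv.Perm (Fin n)) :
    permAut n σ (gWord n) = mk (W3 σ) := by
  have hprod : (List.ofFn fun i : Fin n => FreeGroup.of i).prod
      = mk (List.ofFn fun i : Fin n => ((i : Fin n), true)) := by
    rw [List.ofFn_eq_map, prod_map_of, ← List.ofFn_eq_map]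
  have hg : gWord n = mk ((List.ofFn fun i : Fin n => ((i : Fin n), true))
      ++ (List.ofFn fun i : Fin n => ((i : Fin n), true))
      ++ List.ofFn fun i : Fin n => ((i : Fin n), true)) := by
    rw [gWord, hprod, pow_succ, pow_succ, pow_one, mul_mk, mul_mk]
  show freeGroupCongr σ (gWord n) = mk (W3 σ)
  rw [hg, freeGroupCongr_apply, map.mk]
  congr 1
  simp only [List.map_append, List.map_ofFn]
  rfl

lemma W3_take (σ : Equiv.Perm (Fin n)) : (W3 σ).take n = PW σ := by
  rw [W3, List.append_assoc, List.take_append_of_le_length (by rw [PW_length])]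
  exact List.take_of_length_le (by rw [PW_length])

lemma invRev_W3_take (σ : Equiv.Perm (Fin n)) :
    (invRev (W3 σ)).take n = invRev (PW σ) := by
  rw [W3, invRev_append, invRev_append]
  have hlen : (invRev (PW σ)).length = n := by rw [invRev_length, PW_length]
  rw [List.take_append_of_le_length (by rw [hlen])]
  exact List.take_of_length_le (by rw [hlen])

lemma PW_inj {σ τ : Equiv.Perm (Fin n)} (h : PW σ = PW τ) : σ = τ := by
  rw [PW, PW, List.ofFn_inj] at h
  ext i
  have h5 := congrFun h i
  simp only [Prod.mk.injEq] at h5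
  rw [h5.1]

theorem main_ge2 (hn2 : 2 ≤ n) :
    Function.Injective (FreeGroup.lift fun σ : Equiv.Perm (Fin n) => permAut n σ (gWord n)) := by
  haveI : Nontrivial (Equiv.Perm (Fin n)) := by
    refine ⟨⟨Equiv.swap ⟨0, by omega⟩ ⟨1, by omega⟩, 1, ?_⟩⟩
    intro hcon
    have := Equiv.swap_eq_refl_iff.1 hcon
    simp at this
  apply FreeGroup.injective_lift_of_ping_pong _
    (fun σ => {w : FreeGroup (Fin n) | (toWord w).take n = (W3 σ).take n})
    (fun σ => {w : FreeGroup (Fin n) | (toWord w).take n = (invRev (W3 σ)).take n})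
  · -- nonempty
    intro σ
    refine ⟨mk (W3 σ), ?_⟩
    simp only [Set.mem_setOf_eq, toWord_mk, reduce_of_chain' (W3_chain σ)]
  · -- X disjoint
    intro σ τ hst
    rw [Function.onFun, Set.disjoint_left]
    intro w hw hw2
    simp only [Set.mem_setOf_eq] at hw hw2
    apply hst
    apply PW_inj
    rw [← W3_take σ, ← W3_take τ, ← hw, ← hw2]
  · -- Y disjoint
    intro σ τ hst
    rw [Function.onFun, Set.disjoint_left]
    intro w hw hw2
    simp only [Set.mem_setOf_eq] at hw hw2
    apply hst
    apply PW_inj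
    have h3 : invRev (PW σ) = invRev (PW τ) := by
      rw [← invRev_W3_take σ, ← invRev_W3_take τ, ← hw, ← hw2]
    have h4 := congrArg invRev h3
    rwa [invRev_invRev, invRev_invRev] at h4
  · -- X Y disjoint
    intro σ τ
    rw [Set.disjoint_left]
    intro w hw hw2
    simp only [Set.mem_setOf_eq] at hw hw2
    rw [W3_take] at hw
    rw [invRev_W3_take] at hw2
    have hmem : ((σ ⟨0, by omega⟩ : Fin n), true) ∈ (toWord w).take n := by
      rw [hw, PW, List.mem_ofFn]
      exact ⟨⟨0, by omega⟩, rfl⟩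
    rw [hw2] at hmem
    rw [invRev] at hmem
    simp only [List.mem_reverse, List.mem_map] at hmem
    obtain ⟨y, hy, heq⟩ := hmem
    have hsnd := PW_snd y hy
    have h2 := congrArg Prod.snd heq
    simp [hsnd] at h2
  · -- a σ • (Y σ)ᶜ ⊆ X σ
    intro σ
    rintro z ⟨w, hw, rfl⟩
    simp only [Set.mem_compl_iff, Set.mem_setOf_eq] at hw
    simp only [Set.mem_setOf_eq, smul_eq_mul]
    rw [permAut_gWord]
    exact toWord_mul_prefix (W3_chain σ) (by rw [W3_length]; omega) w hw
  · -- (a σ)⁻¹ • (X σ)ᶜ ⊆ Y σ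
    intro σ
    rintro z ⟨w, hw, rfl⟩
    simp only [Set.mem_compl_iff, Set.mem_setOf_eq] at hw
    simp only [Set.mem_setOf_eq, Pi.inv_apply, smul_eq_mul]
    rw [permAut_gWord, inv_mk]
    have hchain : (invRev (W3 σ)).Chain' R := by
      apply chain'_of_const_bool (bb := false)
      intro x hx
      rw [invRev] at hx
      simp only [List.mem_reverse, List.mem_map] at hx
      obtain ⟨y, hy, rfl⟩ := hx
      rw [W3] at hy
      simp only [List.mem_append] at hy
      have : y.2 = true := by rcases hy with (h | h) | h <;> exact PW_snd y h
      simp [this]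
    refine toWord_mul_prefix hchain (by rw [invRev_length, W3_length]; omega) w ?_
    rwa [invRev_invRev]

end Main

/-- For nonzero integers `k₁, …, kₘ` and permutations `β₀ = 1, β₁, …, β_{m−1}` with
`β_{i−1} ≠ β_i` for `1 ≤ i ≤ m − 1`, the word
`(α(β₀)(g))^{k₁} · (α(β₁)(g))^{k₂} · ⋯ · (α(β_{m−1})(g))^{kₘ}` is not the identity. -/
theorem gWord_perm_product_ne_one (n : ℕ) (hn : 1 ≤ n) (m : ℕ) (hm : 1 ≤ m)
    (k : Fin m → ℤ) (hk : ∀ i, k i ≠ 0)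
    (β : Fin m → Equiv.Perm (Fin n)) (hβ0 : β ⟨0, hm⟩ = 1)
    (hβ : ∀ (i : ℕ) (h : i + 1 < m),
      β ⟨i, Nat.lt_of_succ_lt h⟩ ≠ β ⟨i + 1, h⟩) :
    (List.ofFn fun i : Fin m => (permAut n (β i) (gWord n)) ^ (k i)).prod ≠ 1 := by
  rcases eq_or_lt_of_le hn with h1 | h2
  · -- n = 1
    have hsub : Subsingleton (Equiv.Perm (Fin n)) := by
      rw [← h1]
      infer_instance
    have hm1 : m = 1 := by
      by_contra hcon
      have : 2 ≤ m := by omega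
      exact hβ 0 (by omega) (Subsingleton.elim _ _)
    subst hm1
    have hn1 : n = 1 := h1.symm
    subst hn1
    simp only [List.ofFn_succ, List.ofFn_zero, List.prod_cons, List.prod_nil, mul_one]
    rw [show (0 : Fin 1) = (⟨0, hm⟩ : Fin 1) from rfl, hβ0, map_one]
    have hg : gWord 1 = FreeGroup.of (0 : Fin 1) ^ (3 : ℕ) := by
      rw [gWord]
      congr 1
    rw [MulAut.one_apply, hg]
    rw [← zpow_natCast, ← zpow_mul]
    have h3 : (3 : ℤ) * k ⟨0, hm⟩ ≠ 0 := by
      have := hk ⟨0, hm⟩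
      intro hcon
      omega
    have := GW.prod_zpow_ne_one (m := 1) (by omega) (fun _ => (3 : ℤ) * k ⟨0, hm⟩)
      (fun _ => h3) (fun _ => (0 : Fin 1)) (by omega)
    simpa [List.ofFn_succ] using this
  · -- n ≥ 2
    have hinj := main_ge2 (n := n) (by omega)
    have hmap : (List.ofFn fun i : Fin m => (permAut n (β i) (gWord n)) ^ (k i)).prod
        = (FreeGroup.lift fun σ : Equiv.Perm (Fin n) => permAut n σ (gWord n))
          ((List.ofFn fun i : Fin m => FreeGroup.of (β i) ^ (k i)).prod) := by
      rw [map_list_prod, List.map_ofFn]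
      refine congrArg _ (congrArg _ (funext fun i => ?_))
      simp [map_zpow]
    rw [hmap]
    intro hcon
    have := hinj (a₂ := 1) (by simpa using hcon)
    exact GW.prod_zpow_ne_one hm k hk β hβ this
end

section
/- Let n ≥ 1, let F be the free group on generators g_1, …, g_n, let S_n = Equiv.Perm (Fin n) act on F by the homomorphism α : S_n → Aut(F) with α(σ)(g_i) = g_{σ(i)}, and form the semidirect product F ⋊_α S_n. Let g = (g_1·g_2·⋯·g_n)^3 ∈ F. Then the group homomorphism from the free product ℤ ∗ S_n to F ⋊_α S_n determined by sending the generator 1 of ℤ to the element (g, 1) and sending each σ ∈ S_n to (1, σ) is injective. In particular, the cyclic subgroup generated by g and the subgroup S_n are free in F ⋊_α S_n. -/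
set_option linter.unusedSectionVars false
set_option linter.unusedVariables false


namespace ZFP

variable {α : Type*} [DecidableEq α]

/-- The no-cancellation relation on adjacent letters of a word. -/
def RR : (α × Bool) → (α × Bool) → Prop := fun p q => ¬(p.1 = q.1 ∧ p.2 = !q.2)

theorem reduce_eq_self_of_chain : ∀ {L : List (α × Bool)},
    List.Chain' RR L → FreeGroup.reduce L = L := by
  intro L
  induction L with
  | nil => intro _; rfl
  | cons x L ih =>
    intro h
    rw [FreeGroup.reduce.cons, ih h.tail]
    cases L with
    | nil => rfl
    | cons q t =>
      have hx : ¬(x.1 = q.1 ∧ x.2 = !q.2) := (List.isChain_cons_cons.mp h).1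
      simp [hx]

theorem chain_of_reduce_eq : ∀ {L : List (α × Bool)},
    FreeGroup.reduce L = L → List.Chain' RR L := by
  intro L
  induction L with
  | nil => intro _; exact List.isChain_nil
  | cons x L ih =>
    intro h
    rw [FreeGroup.reduce.cons] at h
    rcases hL : FreeGroup.reduce L with - | ⟨q, t⟩ <;> rw [hL] at h <;> dsimp only at h
    · have h' := congrArg List.tail h
      simp at h'
      subst h'; exact List.isChain_singleton _
    · by_cases hc : x.1 = q.1 ∧ x.2 = !q.2
      · rw [if_pos hc] at h
        exfalso
        have h1 : (FreeGroup.reduce L).length ≤ L.length :=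
          FreeGroup.Red.length_le FreeGroup.reduce.red
        have h2 := congrArg List.length h
        rw [hL] at h1
        simp at h1 h2
        omega
      · rw [if_neg hc] at h
        have hLq : q :: t = L := by simpa using h
        subst hLq
        exact List.isChain_cons_cons.mpr ⟨hc, ih hL⟩
theorem invRev_append' (l₁ l₂ : List (α × Bool)) :
    FreeGroup.invRev (l₁ ++ l₂) = FreeGroup.invRev l₂ ++ FreeGroup.invRev l₁ := by
  simp [FreeGroup.invRev]

theorem cancellation : ∀ (k : ℕ) (L₁ L₂ : List (α × Bool)), L₁.length + L₂.length ≤ k →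
    List.Chain' RR L₁ → List.Chain' RR L₂ →
    ∃ a c b, L₁ = a ++ c ∧ L₂ = FreeGroup.invRev c ++ b ∧
      FreeGroup.reduce (L₁ ++ L₂) = a ++ b := by
  intro k
  induction k with
  | zero =>
    intro L₁ L₂ hlen _ _
    have h1 : L₁ = [] := by cases L₁ <;> simp_all
    have h2 : L₂ = [] := by cases L₂ <;> simp_all
    subst h1; subst h2
    exact ⟨[], [], [], by simp, by simp [FreeGroup.invRev], by simp⟩
  | succ k ih =>
    intro L₁ L₂ hlen h1 h2
    rcases L₂ with - | ⟨p, T⟩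
    · exact ⟨L₁, [], [], by simp, by simp [FreeGroup.invRev],
        by simpa using reduce_eq_self_of_chain h1⟩
    rcases List.eq_nil_or_concat' L₁ with rfl | ⟨M, ℓ, rfl⟩
    · exact ⟨[], [], p :: T, by simp, by simp [FreeGroup.invRev],
        by simpa using reduce_eq_self_of_chain h2⟩
    by_cases hc : p = (ℓ.1, !ℓ.2)
    · subst hc
      have hstep : FreeGroup.Red.Step ((M ++ [ℓ]) ++ (ℓ.1, !ℓ.2) :: T) (M ++ T) := by
        have := @FreeGroup.Red.Step.not α M T ℓ.1 ℓ.2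
        simpa using this
      have hred := FreeGroup.reduce.Step.eq hstep
      have hM : List.Chain' RR M := h1.left_of_append
      have hT : List.Chain' RR T := h2.tail
      obtain ⟨a, c, b, e1, e2, e3⟩ := ih M T (by simp at hlen ⊢; omega) hM hT
      refine ⟨a, c ++ [ℓ], b, by rw [e1]; simp, ?_, by rw [hred, e3]⟩
      rw [invRev_append' c [ℓ]]
      have : FreeGroup.invRev [ℓ] = [(ℓ.1, !ℓ.2)] := by simp [FreeGroup.invRev]
      rw [this, e2]
      simp
    · refine ⟨M ++ [ℓ], [], p :: T, by simp, by simp [FreeGroup.invRev], ?_⟩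
      have hch : List.Chain' RR ((M ++ [ℓ]) ++ p :: T) := by
        apply h1.append h2
        intro x hx y hy
        simp at hx hy
        subst hx; subst hy
        rintro ⟨ha, hb⟩
        exact hc (Prod.ext ha.symm (by simp [hb]))
      rw [reduce_eq_self_of_chain hch]

theorem prefix_of_prefix_length_le' {l a b : List (α × Bool)} (h1 : a <+: l) (h2 : b <+: l)
    (h : a.length ≤ b.length) : a <+: b := by
  have e1 := List.prefix_iff_eq_take.mp h1
  have e2 := List.prefix_iff_eq_take.mp h2
  have : a = b.take a.length := by
    rw [e2, List.take_take, min_eq_left h, ← e1]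
  rw [this]
  exact List.take_prefix _ _

theorem suffix_of_suffix_length_le' {l a b : List (α × Bool)} (h1 : a <:+ l) (h2 : b <:+ l)
    (h : a.length ≤ b.length) : a <:+ b := by
  rw [← List.reverse_prefix] at h1 h2 ⊢
  exact prefix_of_prefix_length_le' h1 h2 (by simpa using h)

theorem prefix_eq_of_length {l a b : List (α × Bool)} (h1 : a <+: l) (h2 : b <+: l)
    (h : a.length = b.length) : a = b :=
  (prefix_of_prefix_length_le' h1 h2 h.le).eq_of_length h

theorem chain'_of_snd_eq {L : List (α × Bool)} (b : Bool) (h : ∀ p ∈ L, p.2 = b) :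
    List.Chain' RR L := by
  induction L with
  | nil => exact List.isChain_nil
  | cons x t ih =>
    cases t with
    | nil => exact List.isChain_singleton _
    | cons y t' =>
      refine List.isChain_cons_cons.mpr ⟨?_, ih fun p hp => h p (List.mem_cons_of_mem _ hp)⟩
      have hx := h x (by simp)
      have hy := h y (by simp)
      rintro ⟨-, h2⟩
      rw [hx, hy] at h2
      simp at h2

theorem prefix_flatten_replicate {m : ℕ} (hm : 1 ≤ m) (u : List (α × Bool)) :
    u <+: (List.replicate m u).flatten := by
  obtain ⟨j, rfl⟩ : ∃ j, m = j + 1 := ⟨m - 1, by omega⟩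
  rw [List.replicate_succ, List.flatten_cons]
  exact List.prefix_append _ _

theorem suffix_flatten_replicate {m : ℕ} (hm : 1 ≤ m) (u : List (α × Bool)) :
    u <:+ (List.replicate m u).flatten := by
  induction m with
  | zero => omega
  | succ j ihj =>
    rw [List.replicate_succ, List.flatten_cons]
    rcases Nat.eq_zero_or_pos j with rfl | hj
    · simp
    · exact (ihj hj).trans (List.suffix_append _ _)

theorem length_flatten_replicate (m : ℕ) (u : List (α × Bool)) :
    (List.replicate m u).flatten.length = m * u.length := by
  induction m with
  | zero => simp
  | succ j ihj =>
    rw [List.replicate_succ, List.flatten_cons, List.length_append, ihj]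
    ring

theorem key_lemma (u x : List (α × Bool)) (m : ℕ) (hm : 2 ≤ m) (hu : u ≠ [])
    (hP : List.Chain' RR (List.replicate m u).flatten) (hx : List.Chain' RR x)
    (hpre : ¬FreeGroup.invRev u <+: x) :
    u <+: FreeGroup.reduce ((List.replicate m u).flatten ++ x) := by
  set P := (List.replicate m u).flatten with hPdef
  obtain ⟨a, c, b, e1, e2, e3⟩ := cancellation (P.length + x.length) P x le_rfl hP hx
  have hPlen : P.length = m * u.length := length_flatten_replicate m u
  have hu1 : 1 ≤ u.length := by cases u <;> simp_all
  have hcu : c.length < u.length := by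
    by_contra hle
    push_neg at hle
    have hcP : c <:+ P := ⟨a, e1.symm⟩
    have huP : u <:+ P := suffix_flatten_replicate (by omega) u
    obtain ⟨d, rfl⟩ := suffix_of_suffix_length_le' huP hcP hle
    apply hpre
    rw [e2, invRev_append' d u]
    exact ⟨FreeGroup.invRev d ++ b, by simp⟩
  have haP : a <+: P := ⟨c, e1.symm⟩
  have huPp : u <+: P := prefix_flatten_replicate (by omega) u
  have hlen1 : a.length + c.length = P.length := by rw [e1]; simp
  have h2u : 2 * u.length ≤ m * u.length := Nat.mul_le_mul_right _ hm
  have halen : u.length ≤ a.length := by omega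
  have hua : u <+: a := prefix_of_prefix_length_le' huPp haP halen
  rw [e3]
  exact hua.trans (a.prefix_append b)


section Specific

variable (n : ℕ)

/-- The word `g₁ g₂ ⋯ gₙ` as a list of letters. -/
def wrd : List (Fin n × Bool) := (List.finRange n).map fun i => (i, true)

theorem wrd_length : (wrd n).length = n := by simp [wrd]

theorem mem_wrd_snd : ∀ p ∈ wrd n, p.2 = true := by
  intro p hp
  simp [wrd] at hp
  obtain ⟨i, rfl⟩ := hp
  rfl

theorem mem_invRev_wrd_snd : ∀ p ∈ FreeGroup.invRev (wrd n), p.2 = false := by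
  intro p hp
  simp [wrd, FreeGroup.invRev] at hp
  obtain ⟨i, rfl⟩ := hp
  rfl

theorem prod_map_of {β : Type*} (l : List β) :
    (l.map fun i => FreeGroup.of i).prod = FreeGroup.mk (l.map fun i => (i, true)) := by
  induction l with
  | nil => simp [FreeGroup.one_eq_mk]
  | cons a l ihl =>
    rw [List.map_cons, List.map_cons, List.prod_cons, ihl]
    show FreeGroup.mk [(a, true)] * _ = _
    rw [FreeGroup.mul_mk]
    rfl

theorem gWord_eq : gWord n = FreeGroup.mk (wrd n) ^ 3 := by
  rw [gWord]
  congr 1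
  rw [List.ofFn_eq_map]
  exact prod_map_of _

theorem toWord_wrd_pow (m : ℕ) :
    (FreeGroup.mk (wrd n) ^ m).toWord = (List.replicate m (wrd n)).flatten := by
  rw [FreeGroup.pow_mk, FreeGroup.toWord_mk]
  exact ZFP.reduce_eq_self_of_chain (ZFP.chain'_of_snd_eq true (by
    intro p hp
    simp only [List.mem_flatten] at hp
    obtain ⟨l, hl, hpl⟩ := hp
    rw [List.eq_of_mem_replicate hl] at hpl
    exact mem_wrd_snd n p hpl))

theorem toWord_wrd_inv_pow (m : ℕ) :
    ((FreeGroup.mk (wrd n))⁻¹ ^ m).toWord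
      = (List.replicate m (FreeGroup.invRev (wrd n))).flatten := by
  rw [FreeGroup.inv_mk, FreeGroup.pow_mk, FreeGroup.toWord_mk]
  exact ZFP.reduce_eq_self_of_chain (ZFP.chain'_of_snd_eq false (by
    intro p hp
    simp only [List.mem_flatten] at hp
    obtain ⟨l, hl, hpl⟩ := hp
    rw [List.eq_of_mem_replicate hl] at hpl
    exact mem_invRev_wrd_snd n p hpl))

theorem wrd_ne_nil (hn : 1 ≤ n) : wrd n ≠ [] := by
  intro h
  have := wrd_length n
  rw [h] at this
  simp at this
  omega

/-- Ping-pong inclusion 1: powers of `g` push `B` into `A`. -/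
theorem zpow_smul_mem (hn : 1 ≤ n) (k : ℤ) (hk : k ≠ 0) (x : FreeGroup (Fin n))
    (hx1 : ¬wrd n <+: x.toWord) (hx2 : ¬FreeGroup.invRev (wrd n) <+: x.toWord) :
    wrd n <+: (gWord n ^ k * x).toWord ∨
      FreeGroup.invRev (wrd n) <+: (gWord n ^ k * x).toWord := by
  have hxc : List.Chain' ZFP.RR x.toWord := ZFP.chain_of_reduce_eq (FreeGroup.reduce_toWord x)
  have hne : wrd n ≠ [] := wrd_ne_nil n hn
  have hgk : gWord n ^ k = FreeGroup.mk (wrd n) ^ (3 * k) := by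
    rw [gWord_eq, ← zpow_natCast (FreeGroup.mk (wrd n)) 3, ← zpow_mul]
    norm_num
  rcases lt_or_gt_of_ne hk with hneg | hpos
  · -- k < 0
    right
    set j : ℕ := (-(3 * k)).toNat with hj
    have hj2 : 2 ≤ j := by omega
    have h1 : gWord n ^ k = (FreeGroup.mk (wrd n))⁻¹ ^ j := by
      rw [hgk, ← zpow_natCast ((FreeGroup.mk (wrd n))⁻¹) j, inv_zpow, ← zpow_neg]
      congr 1
      omega
    rw [h1]
    have h2 : (FreeGroup.mk (wrd n))⁻¹ ^ j * x
        = FreeGroup.mk ((List.replicate j (FreeGroup.invRev (wrd n))).flatten ++ x.toWord) := by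
      conv_lhs => rw [← FreeGroup.mk_toWord (x := (FreeGroup.mk (wrd n))⁻¹ ^ j),
        ← FreeGroup.mk_toWord (x := x)]
      rw [FreeGroup.mul_mk, toWord_wrd_inv_pow]
    rw [h2, FreeGroup.toWord_mk]
    apply ZFP.key_lemma _ _ j hj2
    · intro h; apply hne; have := congrArg List.length h; simpa [FreeGroup.invRev_length] using this
    · apply ZFP.chain'_of_snd_eq false
      intro p hp
      simp only [List.mem_flatten] at hp
      obtain ⟨l, hl, hpl⟩ := hp
      rw [List.eq_of_mem_replicate hl] at hpl
      exact mem_invRev_wrd_snd n p hpl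
    · exact hxc
    · rw [FreeGroup.invRev_invRev]; exact hx1
  · -- k > 0
    left
    set j : ℕ := (3 * k).toNat with hj
    have hj2 : 2 ≤ j := by omega
    have h1 : gWord n ^ k = FreeGroup.mk (wrd n) ^ j := by
      rw [hgk, ← zpow_natCast (FreeGroup.mk (wrd n)) j]
      congr 1
      omega
    rw [h1]
    have h2 : FreeGroup.mk (wrd n) ^ j * x
        = FreeGroup.mk ((List.replicate j (wrd n)).flatten ++ x.toWord) := by
      conv_lhs => rw [← FreeGroup.mk_toWord (x := FreeGroup.mk (wrd n) ^ j),
        ← FreeGroup.mk_toWord (x := x)]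
      rw [FreeGroup.mul_mk, toWord_wrd_pow]
    rw [h2, FreeGroup.toWord_mk]
    apply ZFP.key_lemma _ _ j hj2 hne
    · apply ZFP.chain'_of_snd_eq true
      intro p hp
      simp only [List.mem_flatten] at hp
      obtain ⟨l, hl, hpl⟩ := hp
      rw [List.eq_of_mem_replicate hl] at hpl
      exact mem_wrd_snd n p hpl
    · exact hxc
    · exact hx2

end Specific
section Perm

variable (n : ℕ)

theorem sigma_eq_one (σ : Equiv.Perm (Fin n))
    (h : (wrd n).map (fun p => (σ p.1, p.2)) = wrd n) : σ = 1 := by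
  have h' : (List.finRange n).map (fun i => ((σ i : Fin n), true))
      = (List.finRange n).map (fun i => ((i : Fin n), true)) := by
    simpa [wrd, List.map_map, Function.comp] using h
  rw [List.map_inj_left] at h'
  apply Equiv.ext
  intro i
  simpa using h' i (List.mem_finRange i)

theorem map_invRev_wrd (σ : Equiv.Perm (Fin n)) :
    (FreeGroup.invRev (wrd n)).map (fun p => (σ p.1, p.2))
      = FreeGroup.invRev ((wrd n).map fun p => (σ p.1, p.2)) := by
  simp [FreeGroup.invRev, List.map_reverse, List.map_map]

theorem snd_contra (hn : 1 ≤ n) (l₁ l₂ : List (Fin n × Bool)) (h : l₁ = l₂)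
    (h1 : ∀ p ∈ l₁, p.2 = true) (h2 : ∀ p ∈ l₂, p.2 = false) (hne : l₁ ≠ []) : False := by
  obtain ⟨p, hp⟩ := List.exists_mem_of_ne_nil l₁ hne
  have := h1 p hp
  rw [h] at hp
  have := h2 p hp
  simp_all

/-- Ping-pong inclusion 2: nontrivial permutations push `A` into `B`. -/
theorem perm_smul_mem (hn : 1 ≤ n) (σ : Equiv.Perm (Fin n)) (hσ : σ ≠ 1)
    (x : FreeGroup (Fin n))
    (hx : wrd n <+: x.toWord ∨ FreeGroup.invRev (wrd n) <+: x.toWord) :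
    ¬wrd n <+: (FreeGroup.freeGroupCongr σ x).toWord ∧
      ¬FreeGroup.invRev (wrd n) <+: (FreeGroup.freeGroupCongr σ x).toWord := by
  set f : Fin n × Bool → Fin n × Bool := fun p => (σ p.1, p.2) with hf
  have hL : List.Chain' ZFP.RR x.toWord := ZFP.chain_of_reduce_eq (FreeGroup.reduce_toWord x)
  have hmap : (FreeGroup.freeGroupCongr σ x).toWord = x.toWord.map f := by
    have hx1 : FreeGroup.freeGroupCongr σ x = FreeGroup.mk (x.toWord.map f) := by
      conv_lhs => rw [← FreeGroup.mk_toWord (x := x)]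
      rw [FreeGroup.freeGroupCongr_apply, FreeGroup.map.mk]
    rw [hx1, FreeGroup.toWord_mk]
    apply ZFP.reduce_eq_self_of_chain
    rw [List.Chain', List.isChain_map]
    refine hL.imp ?_
    rintro p q hpq ⟨h1, h2⟩
    exact hpq ⟨σ.injective h1, h2⟩
  rw [hmap]
  have hwlen : ((wrd n).map f).length = (wrd n).length := by simp
  have hinvlen : (FreeGroup.invRev (wrd n)).length = (wrd n).length :=
    FreeGroup.invRev_length
  have hmapsnd : ∀ p ∈ (wrd n).map f, p.2 = true := by
    intro p hp
    simp only [List.mem_map] at hp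
    obtain ⟨q, hq, rfl⟩ := hp
    exact mem_wrd_snd n q hq
  have hmapinvsnd : ∀ p ∈ (FreeGroup.invRev (wrd n)).map f, p.2 = false := by
    intro p hp
    simp only [List.mem_map] at hp
    obtain ⟨q, hq, rfl⟩ := hp
    exact mem_invRev_wrd_snd n q hq
  have hne : wrd n ≠ [] := wrd_ne_nil n hn
  rcases hx with h | h
  · have h1 : (wrd n).map f <+: x.toWord.map f := h.map f
    constructor
    · intro h2
      exact hσ (sigma_eq_one n σ (ZFP.prefix_eq_of_length h1 h2 (by simp)))
    · intro h2
      have heq : (wrd n).map f = FreeGroup.invRev (wrd n) :=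
        ZFP.prefix_eq_of_length h1 h2 (by simp [hinvlen])
      exact snd_contra n hn _ _ heq hmapsnd (mem_invRev_wrd_snd n)
        (by simpa using hne)
  · have h1 : (FreeGroup.invRev (wrd n)).map f <+: x.toWord.map f := h.map f
    constructor
    · intro h2
      have heq : (FreeGroup.invRev (wrd n)).map f = wrd n :=
        ZFP.prefix_eq_of_length h1 h2 (by simp [hinvlen, wrd_length])
      exact snd_contra n hn _ _ heq.symm (mem_wrd_snd n) hmapinvsnd
        (by simpa using hne)
    · intro h2
      have heq : (FreeGroup.invRev (wrd n)).map f = FreeGroup.invRev (wrd n) :=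
        ZFP.prefix_eq_of_length h1 h2 (by simp)
      rw [map_invRev_wrd] at heq
      exact hσ (sigma_eq_one n σ (FreeGroup.invRev_injective heq))
end Perm
section Wiring

open Monoid Pointwise

/-- The semidirect product `F ⋊ Sₙ`. -/
abbrev Gn (n : ℕ) := FreeGroup (Fin n) ⋊[permAut n] Equiv.Perm (Fin n)

instance (n : ℕ) : MulAction (Gn n) (FreeGroup (Fin n)) where
  smul g x := g.left * permAut n g.right x
  one_smul x := by
    show (1 : Gn n).left * permAut n (1 : Gn n).right x = x
    simp
  mul_smul g h x := by
    show (g * h).left * permAut n (g * h).right x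
        = g.left * permAut n g.right (h.left * permAut n h.right x)
    simp [mul_assoc, map_mul, MulAut.mul_apply]

theorem smul_def' {n : ℕ} (g : Gn n) (x : FreeGroup (Fin n)) :
    g • x = g.left * permAut n g.right x := rfl

/-- The two-element family of groups `ℤ`, `Sₙ`. -/
abbrev Hfam (n : ℕ) : Bool → Type := fun b => cond b (Multiplicative ℤ) (Equiv.Perm (Fin n))

instance (n : ℕ) (b : Bool) : Group (Hfam n b) := by
  cases b
  · exact inferInstanceAs (Group (Equiv.Perm (Fin n)))
  · exact inferInstanceAs (Group (Multiplicative ℤ))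

def toI (n : ℕ) : Coprod (Multiplicative ℤ) (Equiv.Perm (Fin n)) →* CoprodI (Hfam n) :=
  Coprod.lift (CoprodI.of (M := Hfam n) (i := true)) (CoprodI.of (M := Hfam n) (i := false))

def fromI (n : ℕ) : CoprodI (Hfam n) →* Coprod (Multiplicative ℤ) (Equiv.Perm (Fin n)) :=
  CoprodI.lift fun b => match b with
    | true => Coprod.inl
    | false => Coprod.inr

theorem fromI_toI (n : ℕ) : (fromI n).comp (toI n) = MonoidHom.id _ := by
  apply Coprod.hom_ext <;> refine MonoidHom.ext fun m => ?_ <;>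
    simp only [MonoidHom.comp_apply, MonoidHom.id_apply, toI, fromI,
      Coprod.lift_apply_inl, Coprod.lift_apply_inr] <;>
    erw [CoprodI.lift_of]

theorem toI_inj (n : ℕ) : Function.Injective (toI n) := by
  intro a b hab
  have h1 := DFunLike.congr_fun (fromI_toI n) a
  have h2 := DFunLike.congr_fun (fromI_toI n) b
  simp only [MonoidHom.comp_apply, MonoidHom.id_apply] at h1 h2
  rw [← h1, ← h2, hab]

/-- The family of homomorphisms into the semidirect product. -/
def Ffam (n : ℕ) : ∀ b, Hfam n b →* Gn n := fun b =>
  match b with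
  | true => zpowersHom (Gn n) (SemidirectProduct.inl (gWord n))
  | false => SemidirectProduct.inr

/-- The ping-pong sets. -/
def Xfam (n : ℕ) : Bool → Set (FreeGroup (Fin n)) := fun b =>
  cond b {x | wrd n <+: x.toWord ∨ FreeGroup.invRev (wrd n) <+: x.toWord}
    {x | ¬wrd n <+: x.toWord ∧ ¬FreeGroup.invRev (wrd n) <+: x.toWord}

end Wiring
end ZFP


open Monoid in
/-- The homomorphism from the free product `ℤ ∗ Sₙ` to the semidirect product
`F ⋊[α] Sₙ` sending the generator `1` of `ℤ` to `(g, 1)` and each `σ ∈ Sₙ` to `(1, σ)`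
is injective; in particular the cyclic subgroup generated by `g` and the subgroup `Sₙ`
are free in `F ⋊[α] Sₙ`. -/
theorem zpowers_free_perm (n : ℕ) (hn : 1 ≤ n) :
    Function.Injective
      (Coprod.lift
        (zpowersHom (FreeGroup (Fin n) ⋊[permAut n] Equiv.Perm (Fin n))
          (SemidirectProduct.inl (gWord n)))
        (SemidirectProduct.inr (φ := permAut n))) := by
  classical
  open Pointwise ZFP in
  have hcomp : (CoprodI.lift (ZFP.Ffam n)).comp (ZFP.toI n)
      = Coprod.lift
        (zpowersHom (FreeGroup (Fin n) ⋊[permAut n] Equiv.Perm (Fin n))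
          (SemidirectProduct.inl (gWord n)))
        (SemidirectProduct.inr (φ := permAut n)) := by
    apply Coprod.hom_ext <;> refine MonoidHom.ext fun m => ?_ <;>
      simp only [MonoidHom.comp_apply, ZFP.toI,
        Coprod.lift_apply_inl, Coprod.lift_apply_inr] <;>
      erw [Monoid.CoprodI.lift_of]
  have hinj : Function.Injective (CoprodI.lift (ZFP.Ffam n)) := by
    refine Monoid.CoprodI.lift_injective_of_ping_pong (ZFP.Ffam n) ?_ (ZFP.Xfam n) ?_ ?_ ?_
    · refine Or.inr ⟨true, ?_⟩
      exact le_trans (by exact_mod_cast (Cardinal.nat_lt_aleph0 3).le)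
        (Cardinal.aleph0_le_mk (Multiplicative ℤ))
    · intro b
      cases b
      · refine ⟨1, ?_, ?_⟩
        · intro h
          rw [FreeGroup.toWord_one] at h
          exact ZFP.wrd_ne_nil n hn (List.prefix_nil.mp h)
        · intro h
          rw [FreeGroup.toWord_one] at h
          have := List.prefix_nil.mp h
          have h2 := congrArg List.length this
          rw [FreeGroup.invRev_length, ZFP.wrd_length] at h2
          simp at h2
          omega
      · refine ⟨FreeGroup.mk (ZFP.wrd n), Or.inl ?_⟩
        rw [FreeGroup.toWord_mk,
          ZFP.reduce_eq_self_of_chain (ZFP.chain'_of_snd_eq true (ZFP.mem_wrd_snd n))]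
    · intro i j hij
      have key : Disjoint (ZFP.Xfam n true) (ZFP.Xfam n false) := by
        rw [Set.disjoint_left]
        rintro x hx hx'
        exact hx.elim (fun h => hx'.1 h) (fun h => hx'.2 h)
      cases i <;> cases j <;> simp at hij
      · exact key.symm
      · exact key
    · intro i j hij
      cases i <;> cases j <;> simp at hij
      · -- i = false (Sₙ), j = true
        show ∀ σ : Equiv.Perm (Fin n), σ ≠ 1 →
          (SemidirectProduct.inr (φ := permAut n)) σ • ZFP.Xfam n true ⊆ ZFP.Xfam n false
        intro σ hσ y hy
        rw [Set.mem_smul_set] at hy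
        obtain ⟨x, hx, rfl⟩ := hy
        have hact : (SemidirectProduct.inr (φ := permAut n)) σ • x
            = FreeGroup.freeGroupCongr σ x := by
          rw [ZFP.smul_def']
          simp
          rfl
        rw [hact]
        exact ZFP.perm_smul_mem n hn _ hσ x hx
      · -- i = true (ℤ), j = false
        show ∀ h : Multiplicative ℤ, h ≠ 1 →
          (zpowersHom (FreeGroup (Fin n) ⋊[permAut n] Equiv.Perm (Fin n))
            (SemidirectProduct.inl (gWord n))) h • ZFP.Xfam n false ⊆ ZFP.Xfam n true
        intro h hne y hy
        rw [Set.mem_smul_set] at hy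
        obtain ⟨x, hx, rfl⟩ := hy
        have hk : Multiplicative.toAdd h ≠ 0 := by
          intro h0
          exact hne (toAdd_eq_zero.mp h0)
        have hact : (zpowersHom (FreeGroup (Fin n) ⋊[permAut n] Equiv.Perm (Fin n))
              (SemidirectProduct.inl (gWord n))) h • x
            = gWord n ^ Multiplicative.toAdd h * x := by
          rw [ZFP.smul_def', zpowersHom_apply,
            ← map_zpow (SemidirectProduct.inl (φ := permAut n)) (gWord n)
              (Multiplicative.toAdd h)]
          simp only [SemidirectProduct.left_inl, SemidirectProduct.right_inl, map_one,
            MulAut.one_apply]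
        rw [hact]
        exact ZFP.zpow_smul_mem n hn _ hk x hx.1 hx.2
  rw [← hcomp, MonoidHom.coe_comp]
  exact hinj.comp (ZFP.toI_inj n)
end

section
/- Let n ≥ 1 and m ≥ 0 be integers, set r = n + m, and let F_r be the free group on generators g_1, …, g_n, g_{n+1}, …, g_r. Let S_n = Equiv.Perm (Fin n) act on F_r by the homomorphism α : S_n → Aut(F_r) with α(σ)(g_i) = g_{σ(i)} for 1 ≤ i ≤ n and α(σ)(g_j) = g_j for n+1 ≤ j ≤ r, and form the semidirect product F_r ⋊_α S_n. For 1 ≤ i ≤ n let h_i = (g_1^i·g_2^i·⋯·g_r^i)^3 ∈ F_r. Then: (a) for every σ ∈ S_n and every n+1 ≤ j ≤ r, the elements (1, σ) and (g_j, 1) of F_r ⋊_α S_n commute; and (b) the group homomorphism from the free product F_n ∗ (S_n × F_m) to F_r ⋊_α S_n, determined by sending the i-th generator of the free group F_n to (h_i, 1), sending (σ, 1) ∈ S_n × F_m to (1, σ), and sending the j-th generator of the free group F_m (viewed in S_n × F_m) to (g_{n+j}, 1), is injective. -/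
/-- The homomorphism `α` from `Sₙ = Equiv.Perm (Fin n)` into the automorphism group of the
free group `F_r` on `Fin n ⊕ Fin m` (with `r = n + m`), permuting the first `n` generators
and fixing the remaining `m` generators. -/
def permAutS (n m : ℕ) : Equiv.Perm (Fin n) →* MulAut (FreeGroup (Fin n ⊕ Fin m)) where
  toFun σ := FreeGroup.freeGroupCongr (Equiv.sumCongr σ (Equiv.refl (Fin m)))
  map_one' := by
    have h : (Equiv.sumCongr (1 : Equiv.Perm (Fin n)) (Equiv.refl (Fin m)))
        = Equiv.refl (Fin n ⊕ Fin m) := by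
      ext x; cases x <;> rfl
    try dsimp only
    rw [h]
    exact FreeGroup.freeGroupCongr_refl
  map_mul' σ τ := by
    have h : (Equiv.sumCongr (σ * τ) (Equiv.refl (Fin m)))
        = (Equiv.sumCongr τ (Equiv.refl (Fin m))).trans
            (Equiv.sumCongr σ (Equiv.refl (Fin m))) := by
      ext x; cases x <;> rfl
    try dsimp only
    rw [h, ← FreeGroup.freeGroupCongr_trans]
    rfl

/-- `h_i = (g₁^i · g₂^i · ⋯ · g_r^i)³` in the free group on `Fin n ⊕ Fin m`, where the
generators are listed as `g₁, …, gₙ, g_{n+1}, …, g_r` and the exponent is `i + 1` for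
`i : Fin n` (i.e. `1 ≤ i + 1 ≤ n`). -/
def hWord (n m : ℕ) (i : Fin n) : FreeGroup (Fin n ⊕ Fin m) :=
  (((List.ofFn fun a : Fin n => FreeGroup.of (Sum.inl a : Fin n ⊕ Fin m) ^ ((i : ℕ) + 1)) ++
      (List.ofFn fun b : Fin m =>
        FreeGroup.of (Sum.inr b : Fin n ⊕ Fin m) ^ ((i : ℕ) + 1))).prod) ^ 3



open List

namespace PingPongAux

variable {α : Type*} [DecidableEq α]

/-- Letters `p q` adjacent in this order do not cancel. -/
def Rel (p q : α × Bool) : Prop := ¬(p.1 = q.1 ∧ p.2 = !q.2)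

theorem reduced_iff_chain {L : List (α × Bool)} :
    FreeGroup.reduce L = L ↔ List.Chain' Rel L := by
  constructor
  · intro h
    induction L with
    | nil => exact List.IsChain.nil
    | cons x L ih =>
      rw [FreeGroup.reduce.cons] at h
      rcases hL : FreeGroup.reduce L with _ | ⟨hd, tl⟩
      · rw [hL] at h
        simp only at h
        have h2 : ([] : List (α × Bool)) = L := by injection h
        rw [← h2]; exact List.IsChain.singleton _
      · rw [hL] at h
        simp only at h
        split_ifs at h with hc
        · exfalso
          have h1 := FreeGroup.Red.length_le (FreeGroup.reduce.red (L := L))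
          rw [hL] at h1
          have h2 := congrArg List.length h
          simp only [List.length_cons] at h1 h2
          omega
        · have hLe : L = hd :: tl := by
            injection h with h1 h2
            exact h2.symm
          have : FreeGroup.reduce L = L := by rw [hL, hLe]
          have hch := ih this
          rw [hLe]
          refine List.IsChain.cons_cons ?_ (hLe ▸ hch)
          exact hc
  · intro h
    induction L with
    | nil => rfl
    | cons x L ih =>
      have hL : FreeGroup.reduce L = L := ih h.tail
      rw [FreeGroup.reduce.cons, hL]
      cases L with
      | nil => rfl
      | cons hd tl =>
        simp only
        rw [if_neg]
        exact (List.isChain_cons_cons.1 h).1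

theorem Reduced.infix {L M : List (α × Bool)} (h : FreeGroup.reduce L = L)
    (h' : M <:+: L) : FreeGroup.reduce M = M :=
  reduced_iff_chain.2 ((reduced_iff_chain.1 h).infix h')

theorem reduced_append {L M : List (α × Bool)} (hL : FreeGroup.reduce L = L)
    (hM : FreeGroup.reduce M = M)
    (hb : ∀ x ∈ L.getLast?, ∀ y ∈ M.head?, Rel x y) :
    FreeGroup.reduce (L ++ M) = L ++ M := by
  rw [reduced_iff_chain] at *
  exact List.IsChain.append hL hM hb

theorem reduced_of_forall_bool {L : List (α × Bool)} (b : Bool)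
    (h : ∀ p ∈ L, p.2 = b) : FreeGroup.reduce L = L := by
  rw [reduced_iff_chain]
  refine List.Pairwise.isChain ?_
  refine List.pairwise_iff_forall_sublist.2 ?_
  intro p q hs
  have hp := h p (hs.subset (by simp))
  have hq := h q (hs.subset (by simp))
  intro ⟨_, h2⟩
  rw [hp, hq] at h2
  simp at h2

/-- The key cancellation lemma: multiplying two reduced words. -/
theorem exists_reduce_append :
    ∀ (k : ℕ) (L₁ L₂ : List (α × Bool)), L₁.length ≤ k →
    FreeGroup.reduce L₁ = L₁ → FreeGroup.reduce L₂ = L₂ →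
    ∃ w u v, L₁ = u ++ FreeGroup.invRev w ∧ L₂ = w ++ v ∧
      FreeGroup.reduce (L₁ ++ L₂) = u ++ v := by
  intro k
  induction k with
  | zero =>
    intro L₁ L₂ hlen _ h₂
    have : L₁ = [] := List.eq_nil_of_length_eq_zero (Nat.le_zero.1 hlen)
    subst this
    exact ⟨[], [], L₂, by simp [FreeGroup.invRev], by simp, by simpa using h₂⟩
  | succ k ih =>
    intro L₁ L₂ hlen h₁ h₂
    rcases List.eq_nil_or_concat L₁ with rfl | ⟨u₀, a, rfl⟩
    · exact ⟨[], [], L₂, by simp [FreeGroup.invRev], by simp, by simpa using h₂⟩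
    simp only [List.concat_eq_append] at hlen h₁ ⊢
    cases L₂ with
    | nil => exact ⟨[], u₀ ++ [a], [], by simp [FreeGroup.invRev], by simp, by simpa using h₁⟩
    | cons b v₀ =>
      by_cases hc : a.1 = b.1 ∧ a.2 = !b.2
      · -- cancellation at the boundary
        have hu₀ : FreeGroup.reduce u₀ = u₀ :=
          Reduced.infix h₁ ⟨[], [a], by simp⟩
        have hv₀ : FreeGroup.reduce v₀ = v₀ :=
          Reduced.infix h₂ ⟨[b], [], by simp⟩
        have hlen' : u₀.length ≤ k := by
          have := hlen; simp at this; omega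
        obtain ⟨w', u, v, e1, e2, e3⟩ := ih u₀ v₀ hlen' hu₀ hv₀
        refine ⟨b :: w', u, v, ?_, ?_, ?_⟩
        · have hirc : FreeGroup.invRev (b :: w') = FreeGroup.invRev w' ++ [(b.1, !b.2)] := by
            simp [FreeGroup.invRev]
          rw [hirc, e1]
          have ha : a = (b.1, !b.2) := Prod.ext hc.1 hc.2
          rw [ha]
          simp
        · rw [e2]; simp
        · have hstep : FreeGroup.Red.Step ((u₀ ++ [a]) ++ b :: v₀) (u₀ ++ v₀) := by
            have ha : a = (b.1, !b.2) := Prod.ext hc.1 hc.2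
            have : (u₀ ++ [a]) ++ b :: v₀ = u₀ ++ (b.1, !b.2) :: (b.1, b.2) :: v₀ := by
              rw [ha]; simp
            rw [this]
            exact FreeGroup.Red.Step.not_rev
          rw [FreeGroup.reduce.Step.eq hstep, e3]
      · -- no cancellation
        refine ⟨[], u₀ ++ [a], b :: v₀, by simp [FreeGroup.invRev], by simp, ?_⟩
        refine reduced_append h₁ h₂ ?_
        intro x hx y hy
        simp at hx hy
        rw [← hx, ← hy]
        exact hc

theorem toWord_mul (x y : FreeGroup α) :
    ∃ w u v, x.toWord = u ++ FreeGroup.invRev w ∧ y.toWord = w ++ v ∧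
      (x * y).toWord = u ++ v := by
  obtain ⟨w, u, v, e1, e2, e3⟩ := exists_reduce_append x.toWord.length x.toWord y.toWord le_rfl
    (FreeGroup.reduce_toWord x) (FreeGroup.reduce_toWord y)
  refine ⟨w, u, v, e1, e2, ?_⟩
  have : x * y = FreeGroup.mk (x.toWord ++ y.toWord) := by
    rw [← FreeGroup.mul_mk, FreeGroup.mk_toWord, FreeGroup.mk_toWord]
  rw [this, FreeGroup.toWord_mk, e3]

end PingPongAux

open List

namespace PingPongAux

theorem reduced_of_forall_bool' : True := trivial

variable {α β : Type*}

theorem prefix_head {l₁ l₂ : List α} (h : l₁ <+: l₂) (hne : l₁ ≠ []) :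
    l₂.head? = l₁.head? := by
  obtain ⟨t, rfl⟩ := h
  cases l₁ with
  | nil => exact absurd rfl hne
  | cons a l => rfl

theorem prefix_total {l₁ l₂ l₃ : List α} (h1 : l₁ <+: l₃) (h2 : l₂ <+: l₃) :
    l₁ <+: l₂ ∨ l₂ <+: l₁ := by
  rw [List.prefix_iff_eq_take.1 h1, List.prefix_iff_eq_take.1 h2]
  rcases le_total l₁.length l₂.length with h | h
  · exact Or.inl (List.take_isPrefix_take.2 (Or.inl h))
  · exact Or.inr (List.take_isPrefix_take.2 (Or.inl h))

theorem append_prefix_append {A X Y : List α} : A ++ X <+: A ++ Y ↔ X <+: Y := by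
  constructor
  · rintro ⟨t, ht⟩
    rw [List.append_assoc] at ht
    exact ⟨t, List.append_cancel_left ht⟩
  · rintro ⟨t, ht⟩
    exact ⟨t, by rw [List.append_assoc, ht]⟩

theorem prefix_split {P : β → Prop} :
    ∀ (E : List β) (QB : List β) {rest QA : List β},
    (∀ x ∈ E, P x) → (∀ x ∈ QB, P x) →
    (∀ x ∈ rest.head?, ¬ P x) → (∀ x ∈ QA.head?, ¬ P x) → QA ≠ [] →
    QB ++ QA <+: E ++ rest → QB = E ∧ QA <+: rest := by
  intro E
  induction E with
  | nil =>
    intro QB rest QA _ hQB hrest hQA hQAne h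
    cases QB with
    | nil => exact ⟨rfl, by simpa using h⟩
    | cons q QB' =>
      exfalso
      obtain ⟨t, ht⟩ := h
      simp only [List.nil_append, List.cons_append] at ht
      have : rest.head? = some q := by rw [← ht]; rfl
      exact hrest q (by rw [this]; rfl) (hQB q (by simp))
  | cons e E' ih =>
    intro QB rest QA hE hQB hrest hQA hQAne h
    cases QB with
    | nil =>
      exfalso
      obtain ⟨a, QA', rfl⟩ := List.exists_cons_of_ne_nil hQAne
      obtain ⟨t, ht⟩ := h
      simp only [List.nil_append, List.cons_append] at ht
      have : a = e := by injection ht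
      exact hQA a rfl (this ▸ hE e (by simp))
    | cons q QB' =>
      have hqe : q = e := by
        obtain ⟨t, ht⟩ := h
        simp only [List.cons_append] at ht
        injection ht
      subst hqe
      have h' : QB' ++ QA <+: E' ++ rest := by
        obtain ⟨t, ht⟩ := h
        simp only [List.cons_append] at ht
        exact ⟨t, by injection ht⟩
      obtain ⟨h1, h2⟩ := ih QB' (fun x hx => hE x (by simp [hx]))
        (fun x hx => hQB x (by simp [hx])) hrest hQA hQAne h'
      exact ⟨by rw [h1], h2⟩

/-- The "block word": each generator of `L` repeated `e` times with sign `b`. -/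
def blk (e : ℕ) (b : Bool) (L : List α) : List (α × Bool) :=
  L.flatMap fun g => List.replicate e (g, b)

@[simp] theorem blk_nil (e : ℕ) (b : Bool) : blk e b ([] : List α) = [] := rfl

theorem blk_cons (e : ℕ) (b : Bool) (a : α) (L : List α) :
    blk e b (a :: L) = List.replicate e (a, b) ++ blk e b L := by
  simp [blk]

theorem blk_append (e : ℕ) (b : Bool) (L M : List α) :
    blk e b (L ++ M) = blk e b L ++ blk e b M := by
  simp [blk]

theorem mem_blk {e : ℕ} {b : Bool} {L : List α} {p : α × Bool} (h : p ∈ blk e b L) :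
    p.2 = b ∧ p.1 ∈ L := by
  simp only [blk, List.mem_flatMap, List.eq_replicate_iff, List.mem_replicate] at h
  obtain ⟨a, ha, h⟩ := h
  obtain ⟨-, rfl⟩ := h
  exact ⟨rfl, ha⟩

theorem blk_length (e : ℕ) (b : Bool) (L : List α) : (blk e b L).length = L.length * e := by
  induction L with
  | nil => simp
  | cons a L ih => simp [blk_cons, ih]; ring

theorem blk_ne_nil {e : ℕ} (he : 0 < e) {b : Bool} {L : List α} (hL : L ≠ []) :
    blk e b L ≠ [] := by
  obtain ⟨a, L', rfl⟩ := List.exists_cons_of_ne_nil hL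
  rw [blk_cons]
  intro h
  rcases List.append_eq_nil_iff.1 h with ⟨h1, -⟩
  rw [List.replicate_eq_nil_iff] at h1
  omega

theorem blk_head? {e : ℕ} (he : 0 < e) {b : Bool} (a : α) (L : List α) :
    (blk e b (a :: L)).head? = some (a, b) := by
  obtain ⟨e', rfl⟩ := Nat.exists_eq_succ_of_ne_zero he.ne'
  rw [blk_cons, List.replicate_succ]
  rfl

theorem blk_map (e : ℕ) (b : Bool) (f : α → β) (L : List α) :
    blk e b (L.map f) = (blk e b L).map (fun p => (f p.1, p.2)) := by
  induction L with
  | nil => simp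
  | cons a L ih => simp [blk_cons, ih, List.map_replicate]

theorem invRev_blk (e : ℕ) (b : Bool) (L : List α) :
    FreeGroup.invRev (blk e b L) = blk e (!b) L.reverse := by
  induction L with
  | nil => simp [FreeGroup.invRev]
  | cons a L ih =>
    rw [blk_cons, FreeGroup.invRev, List.map_append, List.reverse_append,
      List.reverse_cons, blk_append]
    rw [FreeGroup.invRev] at ih
    rw [ih]
    simp [blk_cons, List.map_replicate]

theorem blk_reduced [DecidableEq α] (e : ℕ) (b : Bool) (L : List α) :
    FreeGroup.reduce (blk e b L) = blk e b L :=
  reduced_of_forall_bool b (fun p hp => (mem_blk hp).1)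

theorem blk_prefix_eq_lists {e : ℕ} (he : 0 < e) {b : Bool} :
    ∀ {L M : List α}, L.length = M.length → blk e b L <+: blk e b M → L = M := by
  intro L
  induction L with
  | nil =>
    intro M hlen _
    exact (List.eq_nil_of_length_eq_zero hlen.symm).symm
  | cons a L' ih =>
    intro M hlen h
    cases M with
    | nil => simp at hlen
    | cons c M' =>
      have hac : a = c := by
        have h1 := prefix_head h (blk_ne_nil he (by simp))
        rw [blk_head? he, blk_head? he] at h1
        injection h1 with h1
        exact (Prod.ext_iff.1 h1).1.symm
      subst hac
      rw [blk_cons, blk_cons] at h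
      have h' := append_prefix_append.1 h
      rw [ih (by simpa using hlen) h']

theorem blk_prefix_full {e e' : ℕ} (he : 0 < e) (he' : 0 < e') {b : Bool}
    {L M : List α} (hlen : L.length = M.length) (hL2 : 2 ≤ L.length)
    (hLc : L.Chain' (· ≠ ·)) (hMc : M.Chain' (· ≠ ·))
    (h : blk e b L <+: blk e' b M) : e = e' ∧ L = M := by
  obtain ⟨a, L1, rfl⟩ : ∃ a L1, L = a :: L1 := by
    cases L with
    | nil => simp at hL2
    | cons a L1 => exact ⟨a, L1, rfl⟩
  obtain ⟨d, L2, rfl⟩ : ∃ d L2, L1 = d :: L2 := by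
    cases L1 with
    | nil => simp at hL2
    | cons d L2 => exact ⟨d, L2, rfl⟩
  obtain ⟨c, M1, rfl⟩ : ∃ c M1, M = c :: M1 := by
    cases M with
    | nil => simp at hlen
    | cons c M1 => exact ⟨c, M1, rfl⟩
  obtain ⟨d', M2, rfl⟩ : ∃ d' M2, M1 = d' :: M2 := by
    cases M1 with
    | nil => simp at hlen
    | cons d' M2 => exact ⟨d', M2, rfl⟩
  have hac : a = c := by
    have h1 := prefix_head h (blk_ne_nil he (by simp))
    rw [blk_head? he, blk_head? he'] at h1
    injection h1 with h1
    exact (Prod.ext_iff.1 h1).1.symm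
  subst hac
  have had : a ≠ d := (List.isChain_cons_cons.1 hLc).1
  have had' : a ≠ d' := (List.isChain_cons_cons.1 hMc).1
  have hee : e = e' := by
    rcases lt_trichotomy e e' with hlt | heq | hgt
    · exfalso
      have hd := h.drop e
      have hq1 : (blk e b (a :: d :: L2)).drop e = blk e b (d :: L2) := by
        rw [blk_cons, List.drop_append_of_le_length (by simp), List.drop_replicate,
          Nat.sub_self, List.replicate_zero, List.nil_append]
      have hq2 : (blk e' b (a :: d' :: M2)).drop e =
          List.replicate (e' - e) (a, b) ++ blk e' b (d' :: M2) := by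
        rw [blk_cons, show List.replicate e' (a, b) = List.replicate e (a, b) ++
            List.replicate (e' - e) (a, b) by
          rw [← List.replicate_add]; congr 1; omega, List.append_assoc,
          List.drop_append_of_le_length (by simp), List.drop_replicate,
          Nat.sub_self, List.replicate_zero, List.nil_append]
      rw [hq1, hq2] at hd
      have h1 := prefix_head hd (blk_ne_nil he (by simp))
      rw [blk_head? he] at h1
      have h2 : (List.replicate (e' - e) (a, b) ++ blk e' b (d' :: M2)).head? =
          some (a, b) := by
        have : 0 < e' - e := by omega
        obtain ⟨t, ht⟩ := Nat.exists_eq_succ_of_ne_zero this.ne'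
        rw [ht, List.replicate_succ]
        rfl
      rw [h2] at h1
      injection h1 with h1
      simp only [Prod.mk.injEq] at h1
      cases h1.1
      exact had rfl
    · exact heq
    · exfalso
      have hd := h.drop e'
      have hq1 : (blk e b (a :: d :: L2)).drop e' =
          List.replicate (e - e') (a, b) ++ blk e b (d :: L2) := by
        rw [blk_cons, show List.replicate e (a, b) = List.replicate e' (a, b) ++
            List.replicate (e - e') (a, b) by
          rw [← List.replicate_add]; congr 1; omega, List.append_assoc,
          List.drop_append_of_le_length (by simp), List.drop_replicate,
          Nat.sub_self, List.replicate_zero, List.nil_append]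
      have hq2 : (blk e' b (a :: d' :: M2)).drop e' = blk e' b (d' :: M2) := by
        rw [blk_cons, List.drop_append_of_le_length (by simp), List.drop_replicate,
          Nat.sub_self, List.replicate_zero, List.nil_append]
      rw [hq1, hq2] at hd
      have hne : List.replicate (e - e') (a, b) ++ blk e b (d :: L2) ≠ [] := by
        simp [blk_ne_nil he (show (d :: L2) ≠ [] by simp)]
      have h1 := prefix_head hd hne
      rw [blk_head? he'] at h1
      have h2 : (List.replicate (e - e') (a, b) ++ blk e b (d :: L2)).head? =
          some (a, b) := by
        have : 0 < e - e' := by omega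
        obtain ⟨t, ht⟩ := Nat.exists_eq_succ_of_ne_zero this.ne'
        rw [ht, List.replicate_succ]
        rfl
      rw [h2] at h1
      injection h1 with h1
      simp only [Prod.mk.injEq] at h1
      cases h1.1
      exact had' rfl
  subst hee
  exact ⟨rfl, blk_prefix_eq_lists he hlen h⟩

theorem blk_comparable {e e' : ℕ} (he : 0 < e) (he' : 0 < e') {b : Bool}
    {L M : List α} (hlen : L.length = M.length) (hL2 : 2 ≤ L.length)
    (hLc : L.Chain' (· ≠ ·)) (hMc : M.Chain' (· ≠ ·))
    (h : blk e b L <+: blk e' b M ∨ blk e' b M <+: blk e b L) : e = e' ∧ L = M := by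
  rcases h with h | h
  · exact blk_prefix_full he he' hlen hL2 hLc hMc h
  · obtain ⟨h1, h2⟩ := blk_prefix_full he' he hlen.symm (hlen ▸ hL2) hMc hLc h
    exact ⟨h1.symm, h2.symm⟩

end PingPongAux

namespace PingPongAux

variable {α β : Type*}

theorem invRev_append (L M : List (α × Bool)) :
    FreeGroup.invRev (L ++ M) = FreeGroup.invRev M ++ FreeGroup.invRev L := by
  simp [FreeGroup.invRev]

theorem flat_rep (k : ℕ) (L : List α) :
    (List.replicate (k + 1) L).flatten = L ++ (List.replicate k L).flatten := by
  rw [List.replicate_succ, List.flatten_cons]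

theorem flat_rep' (k : ℕ) (L : List α) :
    (List.replicate (k + 1) L).flatten = (List.replicate k L).flatten ++ L := by
  rw [List.replicate_succ', List.flatten_append]
  simp

theorem flat_rep_length (k : ℕ) (L : List α) :
    ((List.replicate k L).flatten).length = k * L.length := by
  induction k with
  | zero => simp
  | succ k ih => rw [flat_rep, List.length_append, ih]; ring

theorem invRev_flat_rep (k : ℕ) (L : List (α × Bool)) :
    FreeGroup.invRev ((List.replicate k L).flatten) =
      (List.replicate k (FreeGroup.invRev L)).flatten := by
  induction k with
  | zero => simp [FreeGroup.invRev]
  | succ k ih =>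
    rw [flat_rep, invRev_append, ih, flat_rep']

theorem toWord_map [DecidableEq α] [DecidableEq β] {f : α → β}
    (hf : Function.Injective f) (x : FreeGroup α) :
    (FreeGroup.map f x).toWord = x.toWord.map (fun p => (f p.1, p.2)) := by
  conv_lhs => rw [← FreeGroup.mk_toWord (x := x)]
  rw [FreeGroup.map.mk, FreeGroup.toWord_mk]
  apply reduced_iff_chain.2
  refine List.isChain_map_of_isChain _ ?_ (reduced_iff_chain.1 (FreeGroup.reduce_toWord x))
  intro a b hab
  intro ⟨h1, h2⟩
  exact hab ⟨hf h1, h2⟩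

theorem map_injective [DecidableEq α] [DecidableEq β] {f : α → β}
    (hf : Function.Injective f) : Function.Injective (FreeGroup.map f : FreeGroup α → FreeGroup β) := by
  intro x y h
  have h2 := congrArg FreeGroup.toWord h
  rw [toWord_map hf, toWord_map hf] at h2
  have : Function.Injective (fun p : α × Bool => (f p.1, p.2)) := by
    intro p q hpq
    simp only [Prod.mk.injEq] at hpq
    exact Prod.ext (hf hpq.1) hpq.2
  exact FreeGroup.toWord_injective (List.map_injective_iff.2 this h2)

/-- "Fact A": if `x` does not start with `q⁻¹`, then `q^k * x` starts with `q`. -/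
theorem pow_mul_prefix [DecidableEq α] {q : List (α × Bool)} {k : ℕ} (hk : 2 ≤ k)
    (hred : FreeGroup.reduce ((List.replicate k q).flatten) = (List.replicate k q).flatten)
    {x : FreeGroup α} (hx : ¬ FreeGroup.invRev q <+: x.toWord) :
    q <+: ((FreeGroup.mk q) ^ k * x).toWord := by
  obtain ⟨w, u, v, e1, e2, e3⟩ := toWord_mul ((FreeGroup.mk q) ^ k) x
  have hQ : ((FreeGroup.mk q) ^ k).toWord = (List.replicate k q).flatten := by
    rw [FreeGroup.pow_mk, FreeGroup.toWord_mk, hred]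
  rw [hQ] at e1
  obtain ⟨k', rfl⟩ : ∃ k', k = k' + 1 := ⟨k - 1, by omega⟩
  have hq_flat : q <+: (List.replicate (k' + 1) q).flatten := ⟨_, (flat_rep k' q).symm⟩
  have hu_flat : u <+: (List.replicate (k' + 1) q).flatten := ⟨_, e1.symm⟩
  have hw : w <+: (List.replicate (k' + 1) (FreeGroup.invRev q)).flatten := by
    have := congrArg FreeGroup.invRev e1
    rw [invRev_flat_rep, invRev_append, FreeGroup.invRev_invRev] at this
    exact ⟨_, this.symm⟩
  have hiq : FreeGroup.invRev q <+:
      (List.replicate (k' + 1) (FreeGroup.invRev q)).flatten :=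
    ⟨_, (flat_rep k' (FreeGroup.invRev q)).symm⟩
  have hwq : w <+: FreeGroup.invRev q := by
    rcases prefix_total hw hiq with h | h
    · exact h
    · exact absurd (h.trans ⟨v, e2.symm⟩) hx
  have hwlen : w.length ≤ q.length := by
    have := hwq.length_le
    rwa [FreeGroup.invRev_length] at this
  have hulen : q.length ≤ u.length := by
    have h1 := congrArg List.length e1
    rw [flat_rep_length, List.length_append, FreeGroup.invRev_length] at h1
    have : 2 * q.length ≤ (k' + 1) * q.length := by
      have : 2 ≤ k' + 1 := hk
      exact Nat.mul_le_mul_right _ this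
    omega
  have hqu : q <+: u := by
    rcases prefix_total hq_flat hu_flat with h | h
    · exact h
    · rw [h.eq_of_length (le_antisymm h.length_le hulen)]
  exact hqu.trans (e3 ▸ ⟨v, rfl⟩)

end PingPongAux


namespace PingPongAux

open FreeGroup

variable (n m : ℕ)

/-- abbreviation for the generators type -/
abbrev Γ (n m : ℕ) := Fin n ⊕ Fin m

def gensN : List (Γ n m) := (List.finRange n).map Sum.inl
def gensM : List (Γ n m) := (List.finRange m).map Sum.inr
def gens : List (Γ n m) := gensN n m ++ gensM n m

theorem gens_nodup : (gens n m).Nodup := by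
  refine List.Nodup.append ?_ ?_ ?_
  · exact (List.nodup_finRange n).map Sum.inl_injective
  · exact (List.nodup_finRange m).map Sum.inr_injective
  · intro a ha hb
    simp only [gensN, gensM, List.mem_map] at ha hb
    obtain ⟨a1, -, rfl⟩ := ha
    obtain ⟨b1, -, h⟩ := hb
    exact Sum.inl_ne_inr h.symm

theorem gens_chain' : (gens n m).Chain' (· ≠ ·) := (gens_nodup n m).isChain

theorem gens_length : (gens n m).length = n + m := by simp [gens, gensN, gensM]

theorem gensN_length : (gensN n m).length = n := by simp [gensN]

theorem gensN_ne_nil (hn : 1 ≤ n) : gensN n m ≠ [] := by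
  simp only [gensN, ne_eq, List.map_eq_nil_iff]
  intro h
  have := List.length_finRange (n := n)
  rw [h] at this
  simp at this
  omega

theorem gens_ne_nil (hn : 1 ≤ n) : gens n m ≠ [] := by
  simp only [gens, ne_eq, List.append_eq_nil_iff]
  intro ⟨h1, _⟩
  exact gensN_ne_nil n m hn h1

def Pw (i : Fin n) : List (Γ n m × Bool) := blk ((i : ℕ) + 1) true (gens n m)

theorem Pw_reduced [DecidableEq (Γ n m)] (i : Fin n) :
    FreeGroup.reduce (Pw n m i) = Pw n m i := blk_reduced _ _ _

theorem Pw_ne_nil (hn : 1 ≤ n) (i : Fin n) : Pw n m i ≠ [] :=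
  blk_ne_nil (Nat.succ_pos _) (gens_ne_nil n m hn)

theorem list_prod_mk {ι : Type*} (L : List ι) (f : ι → List (Γ n m × Bool)) :
    (L.map fun g => FreeGroup.mk (f g)).prod = FreeGroup.mk (L.flatMap f) := by
  induction L with
  | nil => rw [List.map_nil, List.prod_nil, List.flatMap_nil, FreeGroup.one_eq_mk]
  | cons a L ih => rw [List.map_cons, List.prod_cons, ih, List.flatMap_cons, FreeGroup.mul_mk]

theorem of_pow_eq_mk (g : Γ n m) (e : ℕ) :
    (FreeGroup.of g : FreeGroup (Γ n m)) ^ e = FreeGroup.mk (List.replicate e (g, true)) := by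
  rw [FreeGroup.of, FreeGroup.pow_mk, List.flatten_replicate_singleton]

theorem hWord_eq (i : Fin n) : hWord n m i = (FreeGroup.mk (Pw n m i)) ^ 3 := by
  rw [hWord]
  congr 1
  rw [List.prod_append]
  have h1 : (List.ofFn fun a : Fin n => FreeGroup.of (Sum.inl a : Γ n m) ^ ((i : ℕ) + 1)).prod
      = FreeGroup.mk (blk ((i : ℕ) + 1) true (gensN n m)) := by
    rw [List.ofFn_eq_map]
    have : ∀ a : Fin n, FreeGroup.of (Sum.inl a : Γ n m) ^ ((i : ℕ) + 1)
        = FreeGroup.mk (List.replicate ((i : ℕ) + 1) ((Sum.inl a : Γ n m), true)) :=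
      fun a => of_pow_eq_mk n m _ _
    rw [List.map_congr_left (fun a _ => this a)]
    have := list_prod_mk n m (L := (List.finRange n).map Sum.inl)
      (f := fun g => List.replicate ((i : ℕ) + 1) ((g : Γ n m), true))
    rw [List.map_map] at this
    have h2 : ((List.finRange n).map fun a =>
        FreeGroup.mk (List.replicate ((i : ℕ) + 1) ((Sum.inl a : Γ n m), true))) =
        (List.finRange n).map ((fun g : Γ n m =>
          FreeGroup.mk (List.replicate ((i : ℕ) + 1) (g, true))) ∘ Sum.inl) := rfl
    rw [h2, this]
    rfl
  have h2 : (List.ofFn fun b : Fin m => FreeGroup.of (Sum.inr b : Γ n m) ^ ((i : ℕ) + 1)).prod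
      = FreeGroup.mk (blk ((i : ℕ) + 1) true (gensM n m)) := by
    rw [List.ofFn_eq_map]
    have : ∀ a : Fin m, FreeGroup.of (Sum.inr a : Γ n m) ^ ((i : ℕ) + 1)
        = FreeGroup.mk (List.replicate ((i : ℕ) + 1) ((Sum.inr a : Γ n m), true)) :=
      fun a => of_pow_eq_mk n m _ _
    rw [List.map_congr_left (fun a _ => this a)]
    have := list_prod_mk n m (L := (List.finRange m).map Sum.inr)
      (f := fun g => List.replicate ((i : ℕ) + 1) ((g : Γ n m), true))
    rw [List.map_map] at this
    have h2 : ((List.finRange m).map fun a =>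
        FreeGroup.mk (List.replicate ((i : ℕ) + 1) ((Sum.inr a : Γ n m), true))) =
        (List.finRange m).map ((fun g : Γ n m =>
          FreeGroup.mk (List.replicate ((i : ℕ) + 1) (g, true))) ∘ Sum.inr) := rfl
    rw [h2, this]
    rfl
  rw [h1, h2, FreeGroup.mul_mk]
  rw [Pw, gens, blk_append]

/-- The letter permutation used by `permAutS`. -/
def eσ (σ : Equiv.Perm (Fin n)) : Γ n m ≃ Γ n m := Equiv.sumCongr σ (Equiv.refl (Fin m))

theorem permAutS_apply (σ : Equiv.Perm (Fin n)) (x : FreeGroup (Γ n m)) :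
    permAutS n m σ x = FreeGroup.map (eσ n m σ) x := rfl

theorem permAutS_toWord (σ : Equiv.Perm (Fin n)) (x : FreeGroup (Γ n m)) :
    (permAutS n m σ x).toWord = x.toWord.map (fun p => (eσ n m σ p.1, p.2)) := by
  rw [permAutS_apply, toWord_map (eσ n m σ).injective]

def βm : FreeGroup (Fin m) →* FreeGroup (Γ n m) := FreeGroup.map Sum.inr

theorem βm_injective : Function.Injective (βm n m) := map_injective Sum.inr_injective

theorem βm_toWord (w : FreeGroup (Fin m)) :
    (βm n m w).toWord = w.toWord.map (fun p => ((Sum.inr p.1 : Γ n m), p.2)) :=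
  toWord_map Sum.inr_injective w

theorem permAutS_fix (σ : Equiv.Perm (Fin n)) (w : FreeGroup (Fin m)) :
    permAutS n m σ (βm n m w) = βm n m w := by
  have h : permAutS n m σ (βm n m w)
      = FreeGroup.map (⇑(eσ n m σ)) (FreeGroup.map Sum.inr w) := rfl
  have h2 : (⇑(eσ n m σ)) ∘ (Sum.inr : Fin m → Γ n m) = Sum.inr := by
    funext b; simp [eσ]
  rw [h, FreeGroup.map.comp, h2]
  rfl

end PingPongAux


namespace PingPongAux

open FreeGroup

variable (n m : ℕ)

/-- right-hand letters -/
def isR (p : Γ n m × Bool) : Prop := p.1.isRight = true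

theorem fst_mem_invRev {α : Type*} {L : List (α × Bool)} {p : α × Bool}
    (h : p ∈ FreeGroup.invRev L) : ∃ q ∈ L, q.1 = p.1 := by
  rw [FreeGroup.invRev, List.mem_reverse, List.mem_map] at h
  obtain ⟨q, hq, rfl⟩ := h
  exact ⟨q, hq, rfl⟩

theorem isR_W (w : FreeGroup (Fin m)) : ∀ p ∈ (βm n m w).toWord, isR n m p := by
  intro p hp
  rw [βm_toWord, List.mem_map] at hp
  obtain ⟨q, -, rfl⟩ := hp
  simp [isR]

theorem finRange_cons (hn : 1 ≤ n) : ∃ a0 t, List.finRange n = a0 :: t := by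
  apply List.exists_cons_of_ne_nil
  intro h
  have := List.length_finRange (n := n)
  rw [h] at this
  simp at this
  omega

theorem gens_cons (hn : 1 ≤ n) : ∃ a0 t, gens n m = Sum.inl a0 :: t := by
  obtain ⟨a0, t, ht⟩ := finRange_cons n hn
  exact ⟨a0, (t.map Sum.inl) ++ gensM n m, by rw [gens, gensN, ht]; rfl⟩

theorem gensN_rev_cons (hn : 1 ≤ n) : ∃ c0 t, (gensN n m).reverse = Sum.inl c0 :: t := by
  have hne : (gensN n m).reverse ≠ [] := by
    simp only [ne_eq, List.reverse_eq_nil_iff]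
    exact gensN_ne_nil n m hn
  obtain ⟨b0, t, ht⟩ := List.exists_cons_of_ne_nil hne
  have hb0 : b0 ∈ gensN n m := by
    rw [← List.mem_reverse, ht]; simp
  rw [gensN, List.mem_map] at hb0
  obtain ⟨c0, -, rfl⟩ := hb0
  exact ⟨c0, t, ht⟩

theorem eσ_fix_inr (σ : Equiv.Perm (Fin n)) (b : Fin m) :
    eσ n m σ (Sum.inr b) = Sum.inr b := rfl

theorem eσ_gensM_rev (σ : Equiv.Perm (Fin n)) :
    ((gensM n m).reverse).map (eσ n m σ) = (gensM n m).reverse := by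
  rw [gensM, ← List.map_reverse, List.map_map]
  rfl

theorem sigma_eq_one_of_fix {σ : Equiv.Perm (Fin n)}
    (h : (gensN n m).map (eσ n m σ) = gensN n m) : σ = 1 := by
  rw [gensN, List.map_map] at h
  have h2 : ∀ a ∈ List.finRange n, (⇑(eσ n m σ) ∘ Sum.inl) a = (Sum.inl : Fin n → Γ n m) a := by
    rw [← List.map_inj_left]
    exact h
  ext a
  have := h2 a (List.mem_finRange a)
  simp only [Function.comp_apply, eσ, Equiv.sumCongr_apply, Sum.map_inl] at this
  have := Sum.inl_injective this
  simp [this]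

theorem sigma_eq_one_of_fix_rev {σ : Equiv.Perm (Fin n)}
    (h : ((gensN n m).reverse).map (eσ n m σ) = (gensN n m).reverse) : σ = 1 := by
  apply sigma_eq_one_of_fix n m (σ := σ)
  have := congrArg List.reverse h
  rw [List.map_reverse, List.reverse_reverse, List.reverse_reverse] at this
  exact this

theorem perm_eq_one_of_n_eq_one (hn : n = 1) (σ : Equiv.Perm (Fin n)) : σ = 1 := by
  ext a
  subst hn
  have h1 := (σ a).isLt
  have h2 := a.isLt
  omega

theorem freegroup_eq_one_of_m_eq_zero (hm : m = 0) (w : FreeGroup (Fin m)) : w = 1 := by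
  subst hm
  rw [← FreeGroup.toWord_eq_nil_iff]
  cases hw : w.toWord with
  | nil => rfl
  | cons p t => exact (p.1).elim0

/-- Membership in two "some" ping-pong sets forces equal indices. -/
theorem some_inj (hn : 1 ≤ n) {i j : Fin n} {x : FreeGroup (Γ n m)}
    (hi : Pw n m i <+: x.toWord ∨ FreeGroup.invRev (Pw n m i) <+: x.toWord)
    (hj : Pw n m j <+: x.toWord ∨ FreeGroup.invRev (Pw n m j) <+: x.toWord) :
    i = j := by
  classical
  obtain ⟨a0, t0, hgens⟩ := gens_cons n m hn
  have hPw_head : ∀ k : Fin n, (Pw n m k).head? = some ((Sum.inl a0 : Γ n m), true) := by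
    intro k
    rw [Pw, hgens]
    exact blk_head? (Nat.succ_pos _) _ _
  have hrev_ne : (gens n m).reverse ≠ [] := by
    simp only [ne_eq, List.reverse_eq_nil_iff]
    exact gens_ne_nil n m hn
  obtain ⟨q0, tq, hq⟩ := List.exists_cons_of_ne_nil hrev_ne
  have hinv_head : ∀ k : Fin n,
      (FreeGroup.invRev (Pw n m k)).head? = some (q0, false) := by
    intro k
    rw [Pw, invRev_blk, hq]
    exact blk_head? (Nat.succ_pos _) _ _
  have hPw_ne : ∀ k : Fin n, Pw n m k ≠ [] := fun k => Pw_ne_nil n m hn k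
  have hinv_ne : ∀ k : Fin n, FreeGroup.invRev (Pw n m k) ≠ [] := by
    intro k h
    have := congrArg List.length h
    rw [FreeGroup.invRev_length] at this
    exact hPw_ne k (List.eq_nil_of_length_eq_zero this)
  -- mixed cases are impossible (head bools differ)
  have mixed : ∀ k l : Fin n, Pw n m k <+: x.toWord →
      FreeGroup.invRev (Pw n m l) <+: x.toWord → False := by
    intro k l h1 h2
    have e1 := prefix_head h1 (hPw_ne k)
    have e2 := prefix_head h2 (hinv_ne l)
    rw [hPw_head] at e1
    rw [hinv_head] at e2
    rw [e1] at e2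
    injection e2 with e2
    have := congrArg Prod.snd e2
    simp at this
  rcases hi with hi | hi <;> rcases hj with hj | hj
  · -- both positive
    by_cases hr : 2 ≤ (gens n m).length
    · have hcomp := prefix_total hi hj
      have := blk_comparable (Nat.succ_pos (i : ℕ)) (Nat.succ_pos (j : ℕ)) rfl hr
        (gens_chain' n m) (gens_chain' n m) hcomp
      have : (i : ℕ) = (j : ℕ) := by omega
      exact Fin.ext this
    · have hn1 : n = 1 := by
        have := gens_length n m
        omega
      apply Fin.ext
      have := i.isLt
      have := j.isLt
      omega
  · exact absurd hj (by intro h2; exact (mixed i j hi h2).elim)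
  · exact absurd hi (by intro h2; exact (mixed j i hj h2).elim)
  · -- both negative
    by_cases hr : 2 ≤ (gens n m).length
    · have hcomp : FreeGroup.invRev (Pw n m i) <+: FreeGroup.invRev (Pw n m j) ∨
          FreeGroup.invRev (Pw n m j) <+: FreeGroup.invRev (Pw n m i) := prefix_total hi hj
      rw [Pw, Pw, invRev_blk, invRev_blk] at hcomp
      have := blk_comparable (Nat.succ_pos (i : ℕ)) (Nat.succ_pos (j : ℕ)) rfl
        (by simpa using hr)
        ((List.nodup_reverse.2 (gens_nodup n m)).isChain) ((List.nodup_reverse.2 (gens_nodup n m)).isChain) hcomp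
      have : (i : ℕ) = (j : ℕ) := by omega
      exact Fin.ext this
    · have hn1 : n = 1 := by
        have := gens_length n m
        omega
      apply Fin.ext
      have := i.isLt
      have := j.isLt
      omega

end PingPongAux


namespace PingPongAux

open FreeGroup

variable {α : Type*}

theorem head?_append_left {l l' : List α} (h : l ≠ []) : (l ++ l').head? = l.head? := by
  cases l with
  | nil => exact absurd rfl h
  | cons a t => rfl

variable (n m : ℕ)

theorem hpp_some_aux (i : Fin n) (z : ℤ) (hz : z ≠ 0) (x : FreeGroup (Γ n m))
    (hx1 : ¬ Pw n m i <+: x.toWord) (hx2 : ¬ FreeGroup.invRev (Pw n m i) <+: x.toWord) :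
    Pw n m i <+: ((hWord n m i ^ z) * x).toWord ∨
      FreeGroup.invRev (Pw n m i) <+: ((hWord n m i ^ z) * x).toWord := by
  classical
  rcases lt_or_gt_of_ne hz with hneg | hpos
  · right
    set k := (3 * (-z)).toNat with hk
    have hk2 : 2 ≤ k := by omega
    have hpow : hWord n m i ^ z = (FreeGroup.mk (FreeGroup.invRev (Pw n m i))) ^ k := by
      have h1 : hWord n m i ^ z = FreeGroup.mk (Pw n m i) ^ ((3 : ℤ) * z) := by
        rw [hWord_eq, ← zpow_natCast (FreeGroup.mk (Pw n m i)) 3, ← zpow_mul]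
        norm_num
      have h2 : (FreeGroup.mk (FreeGroup.invRev (Pw n m i))) ^ k
          = FreeGroup.mk (Pw n m i) ^ (-(k : ℤ)) := by
        rw [← FreeGroup.inv_mk, inv_pow, ← zpow_natCast (FreeGroup.mk (Pw n m i)) k, ← zpow_neg]
      rw [h1, h2]
      congr 1
      omega
    rw [hpow]
    apply pow_mul_prefix hk2
    · apply reduced_of_forall_bool false
      intro p hp
      rw [List.mem_flatten] at hp
      obtain ⟨l, hl, hpl⟩ := hp
      rw [List.eq_of_mem_replicate hl] at hpl
      rw [Pw, invRev_blk] at hpl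
      exact (mem_blk hpl).1
    · rw [FreeGroup.invRev_invRev]
      exact hx1
  · left
    set k := (3 * z).toNat with hk
    have hk2 : 2 ≤ k := by omega
    have hpow : hWord n m i ^ z = (FreeGroup.mk (Pw n m i)) ^ k := by
      have h1 : hWord n m i ^ z = FreeGroup.mk (Pw n m i) ^ ((3 : ℤ) * z) := by
        rw [hWord_eq, ← zpow_natCast (FreeGroup.mk (Pw n m i)) 3, ← zpow_mul]
        norm_num
      have h2 : (FreeGroup.mk (Pw n m i)) ^ k = FreeGroup.mk (Pw n m i) ^ ((k : ℤ)) := by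
        rw [zpow_natCast]
      rw [h1, h2]
      congr 1
      omega
    rw [hpow]
    apply pow_mul_prefix hk2
    · apply reduced_of_forall_bool true
      intro p hp
      rw [List.mem_flatten] at hp
      obtain ⟨l, hl, hpl⟩ := hp
      rw [List.eq_of_mem_replicate hl] at hpl
      exact (mem_blk hpl).1
    · exact hx2

theorem hpp_none_aux (hn : 1 ≤ n) (σ : Equiv.Perm (Fin n)) (w : FreeGroup (Fin m))
    (hσw : ¬ (σ = 1 ∧ w = 1)) (i : Fin n) (x : FreeGroup (Γ n m))
    (hx : Pw n m i <+: x.toWord ∨ FreeGroup.invRev (Pw n m i) <+: x.toWord) (j : Fin n) :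
    ¬ Pw n m j <+: (βm n m w * permAutS n m σ x).toWord ∧
      ¬ FreeGroup.invRev (Pw n m j) <+: (βm n m w * permAutS n m σ x).toWord := by
  classical
  by_cases hr : 2 ≤ n + m
  case neg =>
    exfalso
    apply hσw
    have hn1 : n = 1 := by omega
    have hm0 : m = 0 := by omega
    exact ⟨perm_eq_one_of_n_eq_one n hn1 σ, freegroup_eq_one_of_m_eq_zero m hm0 w⟩
  have hr2 : 2 ≤ (gens n m).length := by rw [gens_length]; exact hr
  obtain ⟨ws, u₁, v₁, e1, e2, e3⟩ := toWord_mul (βm n m w) (permAutS n m σ x)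
  have hu₁R : ∀ p ∈ u₁, isR n m p := fun p hp =>
    isR_W n m w p (by rw [e1]; exact List.mem_append_left _ hp)
  have hwsR : ∀ p ∈ ws, isR n m p := by
    intro p hp
    have hp' : (p.1, !p.2) ∈ FreeGroup.invRev ws := by
      rw [FreeGroup.invRev, List.mem_reverse, List.mem_map]
      exact ⟨p, hp, rfl⟩
    have hmem : (p.1, !p.2) ∈ (βm n m w).toWord := by
      rw [e1]; exact List.mem_append_right _ hp'
    exact isR_W n m w (p.1, !p.2) hmem
  obtain ⟨a0, t0, hgens⟩ := gens_cons n m hn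
  have hPw_head : ∀ k : Fin n, (Pw n m k).head? = some ((Sum.inl a0 : Γ n m), true) :=
    fun k => by rw [Pw, hgens]; exact blk_head? (Nat.succ_pos _) _ _
  have hPw_ne : ∀ k : Fin n, Pw n m k ≠ [] := Pw_ne_nil n m hn
  have hgens_rev : (gens n m).reverse = (gensM n m).reverse ++ (gensN n m).reverse := by
    rw [gens, List.reverse_append]
  have hQdecomp : ∀ k : Fin n, FreeGroup.invRev (Pw n m k) =
      blk ((k : ℕ) + 1) false ((gensM n m).reverse) ++
        blk ((k : ℕ) + 1) false ((gensN n m).reverse) :=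
    fun k => by rw [Pw, invRev_blk, hgens_rev, blk_append]; rfl
  obtain ⟨c0, tc, hc⟩ := gensN_rev_cons n m hn
  have hQA_ne : ∀ k : Fin n, blk ((k : ℕ) + 1) false ((gensN n m).reverse) ≠ [] :=
    fun k => blk_ne_nil (Nat.succ_pos _) (by rw [hc]; simp)
  have hQA_head : ∀ k : Fin n, (blk ((k : ℕ) + 1) false ((gensN n m).reverse)).head?
      = some ((Sum.inl c0 : Γ n m), false) :=
    fun k => by rw [hc]; exact blk_head? (Nat.succ_pos _) _ _
  have hQBR : ∀ k : Fin n, ∀ p ∈ blk ((k : ℕ) + 1) false ((gensM n m).reverse), isR n m p := by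
    intro k p hp
    obtain ⟨-, h2⟩ := mem_blk hp
    rw [List.mem_reverse, gensM, List.mem_map] at h2
    obtain ⟨b, -, hb⟩ := h2
    simp [isR, ← hb]
  have hchainN : ((gensN n m).reverse).Chain' (· ≠ ·) :=
    (List.nodup_reverse.2 ((List.nodup_finRange n).map Sum.inl_injective)).isChain
  rcases hx with hpos | hneg
  · -- positive case: x starts with Pw i
    obtain ⟨u, hu⟩ := hpos
    have hAS : (permAutS n m σ x).toWord =
        blk ((i : ℕ) + 1) true ((gens n m).map (eσ n m σ)) ++
          u.map (fun p => (eσ n m σ p.1, p.2)) := by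
      rw [permAutS_toWord, ← hu, List.map_append, blk_map]
      rfl
    have hgens_map_cons : (gens n m).map (eσ n m σ)
        = (Sum.inl (σ a0) : Γ n m) :: t0.map (eσ n m σ) := by
      rw [hgens]
      rfl
    have hAShead : (permAutS n m σ x).toWord.head? = some ((Sum.inl (σ a0) : Γ n m), true) := by
      rw [hAS, head?_append_left (blk_ne_nil (Nat.succ_pos _) (by rw [hgens_map_cons]; simp)),
        hgens_map_cons]
      exact blk_head? (Nat.succ_pos _) _ _
    have hws_nil : ws = [] := by
      cases hws : ws with
      | nil => rfl
      | cons p t =>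
        exfalso
        have hp := hwsR p (by rw [hws]; simp)
        have hph : (permAutS n m σ x).toWord.head? = some p := by
          rw [e2, hws]; rfl
        rw [hAShead] at hph
        injection hph with hph
        rw [← hph] at hp
        simp [isR] at hp
    rw [hws_nil] at e1 e2
    simp only [FreeGroup.invRev, List.map_nil, List.reverse_nil, List.append_nil,
      List.nil_append] at e1 e2
    have hy : (βm n m w * permAutS n m σ x).toWord
        = (βm n m w).toWord ++ (permAutS n m σ x).toWord := by
      rw [e3, e1, e2]
    constructor
    · intro hpre
      rw [hy] at hpre
      cases hW : (βm n m w).toWord with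
      | cons p t =>
        have h1 := prefix_head hpre (hPw_ne j)
        rw [hPw_head j, hW] at h1
        simp only [List.cons_append, List.head?_cons] at h1
        injection h1 with h1
        have hp := isR_W n m w p (by rw [hW]; simp)
        rw [h1] at hp
        simp [isR] at hp
      | nil =>
        have hw1 : w = 1 := by
          apply βm_injective n m
          rw [_root_.map_one (βm n m), ← FreeGroup.toWord_eq_nil_iff]
          exact hW
        rw [hW, List.nil_append, hAS] at hpre
        have hcomp := prefix_total hpre (List.prefix_append _ _)
        rw [Pw] at hcomp
        obtain ⟨hee, hLM⟩ := blk_comparable (Nat.succ_pos _) (Nat.succ_pos _)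
          (by simp) hr2 (gens_chain' n m)
          (((gens_nodup n m).map (eσ n m σ).injective).isChain) hcomp
        have hσ1 : σ = 1 := by
          have h2 : (gensN n m).map (eσ n m σ) ++ (gensM n m).map (eσ n m σ)
              = gensN n m ++ gensM n m := by
            rw [← List.map_append]
            exact hLM.symm
          have h3 : (gensM n m).map (eσ n m σ) = gensM n m := by
            rw [gensM, List.map_map]; rfl
          rw [h3] at h2
          have h4 := (List.append_inj h2 (by simp)).1
          exact sigma_eq_one_of_fix n m h4
        exact hσw ⟨hσ1, hw1⟩
    · intro hpre
      rw [hy, hQdecomp j] at hpre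
      obtain ⟨-, hQAr⟩ := prefix_split (P := isR n m) (βm n m w).toWord _
        (isR_W n m w) (hQBR j)
        (by rw [hAShead]; intro p hp; rw [Option.mem_some_iff] at hp; rw [← hp]; simp [isR])
        (by rw [hQA_head j]; intro p hp; rw [Option.mem_some_iff] at hp; rw [← hp]; simp [isR])
        (hQA_ne j) hpre
      have h1 := prefix_head hQAr (hQA_ne j)
      rw [hQA_head j, hAShead] at h1
      injection h1 with h1
      have := congrArg Prod.snd h1
      simp at this
  · -- negative case: x starts with (Pw i)⁻¹
    obtain ⟨u, hu⟩ := hneg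
    have hD3 : ((gensM n m).reverse).map (eσ n m σ) = (gensM n m).reverse :=
      eσ_gensM_rev n m σ
    have hAS : (permAutS n m σ x).toWord =
        blk ((i : ℕ) + 1) false ((gensM n m).reverse) ++
          (blk ((i : ℕ) + 1) false (((gensN n m).reverse).map (eσ n m σ)) ++
            u.map (fun p => (eσ n m σ p.1, p.2))) := by
      rw [permAutS_toWord, ← hu, List.map_append, hQdecomp i, List.map_append,
        ← blk_map, ← blk_map, hD3, List.append_assoc]
    set D := blk ((i : ℕ) + 1) false ((gensM n m).reverse) with hDdef
    set C := blk ((i : ℕ) + 1) false (((gensN n m).reverse).map (eσ n m σ)) with hCdef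
    set umap := u.map (fun p => (eσ n m σ p.1, p.2)) with humap
    have hgensN_map_cons : ((gensN n m).reverse).map (eσ n m σ)
        = (Sum.inl (σ c0) : Γ n m) :: tc.map (eσ n m σ) := by
      rw [hc]
      rfl
    have hC_ne : C ≠ [] :=
      blk_ne_nil (Nat.succ_pos _) (by rw [hgensN_map_cons]; simp)
    have hC_head : C.head? = some ((Sum.inl (σ c0) : Γ n m), false) := by
      rw [hCdef, hgensN_map_cons]
      exact blk_head? (Nat.succ_pos _) _ _
    have hDR : ∀ p ∈ D, isR n m p := hQBR i
    -- ws is a prefix of D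
    have hws_pre : ws <+: D ++ (C ++ umap) := by
      rw [← hAS]
      exact ⟨v₁, e2.symm⟩
    have hwsD : ∃ t, D = ws ++ t := by
      rcases prefix_total hws_pre (List.prefix_append _ _) with h | h
      · obtain ⟨t, ht⟩ := h
        exact ⟨t, ht.symm⟩
      · obtain ⟨s, hs⟩ := h
        cases hs' : s with
        | nil => exact ⟨[], by rw [← hs, hs', List.append_nil, List.append_nil]⟩
        | cons p ts =>
          exfalso
          have hpws : p ∈ ws := by rw [← hs, hs']; simp
          have hpR := hwsR p hpws
          have hs2 : s <+: C ++ umap := by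
            have h2 := hws_pre
            rw [← hs] at h2
            exact (append_prefix_append).1 h2
          have h1 := prefix_head hs2 (by rw [hs']; simp)
          rw [head?_append_left hC_ne, hC_head, hs'] at h1
          injection h1 with h1
          rw [← h1] at hpR
          simp [isR] at hpR
    obtain ⟨t, htD⟩ := hwsD
    have hv₁ : v₁ = t ++ (C ++ umap) := by
      have h1 : ws ++ v₁ = ws ++ (t ++ (C ++ umap)) := by
        rw [← e2, hAS, htD, List.append_assoc]
      exact List.append_cancel_left h1
    have hy : (βm n m w * permAutS n m σ x).toWord = (u₁ ++ t) ++ (C ++ umap) := by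
      rw [e3, hv₁, List.append_assoc]
    have hER : ∀ p ∈ u₁ ++ t, isR n m p := by
      intro p hp
      rcases List.mem_append.1 hp with h | h
      · exact hu₁R p h
      · exact hDR p (by rw [htD]; exact List.mem_append_right _ h)
    constructor
    · intro hpre
      rw [hy] at hpre
      have h1 := prefix_head hpre (hPw_ne j)
      rw [hPw_head j] at h1
      cases hE : u₁ ++ t with
      | nil =>
        rw [hE, List.nil_append, head?_append_left hC_ne, hC_head] at h1
        injection h1 with h1
        have := congrArg Prod.snd h1
        simp at this
      | cons p tE =>
        rw [hE] at h1
        simp only [List.cons_append, List.head?_cons] at h1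
        injection h1 with h1
        have hp := hER p (by rw [hE]; simp)
        rw [h1] at hp
        simp [isR] at hp
    · intro hpre
      rw [hy, hQdecomp j] at hpre
      obtain ⟨hEQ, hQAr⟩ := prefix_split (P := isR n m) (u₁ ++ t) _
        hER (hQBR j)
        (by rw [head?_append_left hC_ne, hC_head]
            intro p hp; rw [Option.mem_some_iff] at hp; rw [← hp]; simp [isR])
        (by rw [hQA_head j]; intro p hp; rw [Option.mem_some_iff] at hp; rw [← hp]; simp [isR])
        (hQA_ne j) hpre
      have hcomp := prefix_total hQAr (List.prefix_append _ _)
      have hσ1 : σ = 1 ∧ i = j := by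
        by_cases hn2 : 2 ≤ n
        · have hlen' : ((gensN n m).reverse).length
              = (((gensN n m).reverse).map (eσ n m σ)).length := by
            rw [List.length_map]
          have hL2' : 2 ≤ ((gensN n m).reverse).length := by
            rw [List.length_reverse, gensN_length]
            omega
          obtain ⟨hee, hLM⟩ := blk_comparable (Nat.succ_pos _) (Nat.succ_pos _)
            hlen' hL2' hchainN
            ((List.Nodup.map (eσ n m σ).injective
              (List.nodup_reverse.2 ((List.nodup_finRange n).map Sum.inl_injective))).isChain)
            hcomp
          refine ⟨sigma_eq_one_of_fix_rev n m hLM.symm, Fin.ext ?_⟩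
          omega
        · have hn1 : n = 1 := by omega
          refine ⟨perm_eq_one_of_n_eq_one n hn1 σ, Fin.ext ?_⟩
          have := i.isLt
          have := j.isLt
          omega
      obtain ⟨hσeq, hij⟩ := hσ1
      -- now (u₁ ++ t) = QB j = D, so βm w = 1
      have hED : u₁ ++ t = D := by
        rw [hDdef, hij]
        exact hEQ.symm
      have hw1 : w = 1 := by
        have hmk : βm n m w * FreeGroup.mk D = FreeGroup.mk D := by
          conv_lhs => rw [← FreeGroup.mk_toWord (x := βm n m w)]
          rw [FreeGroup.mul_mk, e1, htD]
          have step1 : FreeGroup.mk ((u₁ ++ FreeGroup.invRev ws) ++ (ws ++ t))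
              = (FreeGroup.mk u₁ * (FreeGroup.mk ws)⁻¹) * (FreeGroup.mk ws * FreeGroup.mk t) := by
            rw [← FreeGroup.mul_mk, ← FreeGroup.mul_mk, ← FreeGroup.mul_mk, FreeGroup.inv_mk]
          rw [step1]
          have step2 : (FreeGroup.mk u₁ * (FreeGroup.mk ws)⁻¹) * (FreeGroup.mk ws * FreeGroup.mk t)
              = FreeGroup.mk u₁ * FreeGroup.mk t := by
            group
          rw [step2, FreeGroup.mul_mk, hED, htD]
        have hβ : βm n m w = 1 := by
          have := mul_right_cancel (b := FreeGroup.mk D) (a := βm n m w) (c := 1)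
            (by rw [one_mul]; exact hmk)
          exact this
        apply βm_injective n m
        rw [_root_.map_one (βm n m)]
        exact hβ
      exact hσw ⟨hσeq, hw1⟩

end PingPongAux


namespace PingPongAux

open FreeGroup

variable (n m : ℕ)

abbrev Gsd (n m : ℕ) := FreeGroup (Γ n m) ⋊[permAutS n m] Equiv.Perm (Fin n)

theorem commute_inr_inl_beta (σ : Equiv.Perm (Fin n)) (w : FreeGroup (Fin m)) :
    (SemidirectProduct.inr σ : Gsd n m) * SemidirectProduct.inl (βm n m w)
      = SemidirectProduct.inl (βm n m w) * SemidirectProduct.inr σ := by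
  have h : (SemidirectProduct.inl (βm n m w) : Gsd n m)
      = SemidirectProduct.inr σ * SemidirectProduct.inl (βm n m w)
        * SemidirectProduct.inr σ⁻¹ := by
    conv_lhs => rw [← permAutS_fix n m σ w]
    exact SemidirectProduct.inl_aut σ (βm n m w)
  calc (SemidirectProduct.inr σ : Gsd n m) * SemidirectProduct.inl (βm n m w)
      = (SemidirectProduct.inr σ * SemidirectProduct.inl (βm n m w)
          * SemidirectProduct.inr σ⁻¹) * SemidirectProduct.inr σ := by
        rw [show (SemidirectProduct.inr σ⁻¹ : Gsd n m) = (SemidirectProduct.inr σ)⁻¹ from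
          _root_.map_inv _ _]
        group
    _ = SemidirectProduct.inl (βm n m w) * SemidirectProduct.inr σ := by rw [← h]

/-- The homomorphism `Sₙ × Fₘ →* F_r ⋊ Sₙ`. -/
def fK : Equiv.Perm (Fin n) × FreeGroup (Fin m) →* Gsd n m where
  toFun p := ⟨βm n m p.2, p.1⟩
  map_one' := by
    ext
    · show βm n m 1 = 1
      exact _root_.map_one _
    · rfl
  map_mul' p q := by
    ext
    · show βm n m (p.2 * q.2) = βm n m p.2 * permAutS n m p.1 (βm n m q.2)
      rw [_root_.map_mul (βm n m), permAutS_fix]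
    · rfl

theorem fK_eq (p : Equiv.Perm (Fin n) × FreeGroup (Fin m)) :
    fK n m p = SemidirectProduct.inl (βm n m p.2) * SemidirectProduct.inr p.1 :=
  SemidirectProduct.mk_eq_inl_mul_inr p.1 (βm n m p.2)

/-- The index family: `none` ↦ `Sₙ × Fₘ`, `some i` ↦ `ℤ`. -/
abbrev Hfam : Option (Fin n) → Type :=
  fun o => Option.rec (Equiv.Perm (Fin n) × FreeGroup (Fin m)) (fun _ => Multiplicative ℤ) o

instance : ∀ o, Group (Hfam n m o)
  | none => inferInstanceAs (Group (Equiv.Perm (Fin n) × FreeGroup (Fin m)))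
  | some _ => inferInstanceAs (Group (Multiplicative ℤ))

/-- The homomorphism family into the semidirect product. -/
def ffam : ∀ o, Hfam n m o →* Gsd n m
  | none => fK n m
  | some i => zpowersHom (Gsd n m) (SemidirectProduct.inl (hWord n m i))

/-- The left-multiplication-after-twist action of the semidirect product on `F_r`. -/
def sdAction : MulAction (Gsd n m) (FreeGroup (Γ n m)) where
  smul g x := g.left * permAutS n m g.right x
  one_smul x := by
    show (1 : Gsd n m).left * permAutS n m (1 : Gsd n m).right x = x
    rw [SemidirectProduct.one_left, SemidirectProduct.one_right, _root_.map_one (permAutS n m), one_mul]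
    rfl
  mul_smul g h x := by
    show (g * h).left * permAutS n m (g * h).right x
        = g.left * permAutS n m g.right (h.left * permAutS n m h.right x)
    rw [SemidirectProduct.mul_left, SemidirectProduct.mul_right,
      _root_.map_mul (permAutS n m) g.right h.right, MulAut.mul_apply,
      _root_.map_mul ((permAutS n m) g.right), mul_assoc]

/-- The ping-pong sets. -/
def Xset : Option (Fin n) → Set (FreeGroup (Γ n m))
  | some i => {x | Pw n m i <+: x.toWord ∨ FreeGroup.invRev (Pw n m i) <+: x.toWord}
  | none => {x | ∀ i : Fin n,
      ¬ Pw n m i <+: x.toWord ∧ ¬ FreeGroup.invRev (Pw n m i) <+: x.toWord}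

theorem lift_ffam_injective (hn : 1 ≤ n) :
    Function.Injective ⇑(Monoid.CoprodI.lift (ffam n m)) := by
  classical
  haveI : Nonempty (Fin n) := ⟨⟨0, hn⟩⟩
  letI := sdAction n m
  have hsmul : ∀ (g : Gsd n m) (x : FreeGroup (Γ n m)),
      g • x = g.left * permAutS n m g.right x := fun _ _ => rfl
  apply Monoid.CoprodI.lift_injective_of_ping_pong (ffam n m) ?_ (Xset n m) ?_ ?_ ?_
  · -- cardinality
    right
    refine ⟨some ⟨0, hn⟩, ?_⟩
    show (3 : Cardinal) ≤ Cardinal.mk (Multiplicative ℤ)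
    refine le_trans ?_ (Cardinal.aleph0_le_mk (Multiplicative ℤ))
    exact_mod_cast (Cardinal.nat_lt_aleph0 3).le
  · -- nonempty
    intro o
    cases o with
    | some i =>
      refine ⟨FreeGroup.mk (Pw n m i), Or.inl ?_⟩
      rw [FreeGroup.toWord_mk, Pw_reduced]
    | none =>
      refine ⟨1, fun i => ⟨?_, ?_⟩⟩
      · intro h
        rw [FreeGroup.toWord_one] at h
        exact Pw_ne_nil n m hn i (List.prefix_nil.1 h)
      · intro h
        rw [FreeGroup.toWord_one] at h
        have h2 := List.prefix_nil.1 h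
        have := congrArg List.length h2
        rw [FreeGroup.invRev_length] at this
        exact Pw_ne_nil n m hn i (List.eq_nil_of_length_eq_zero this)
  · -- disjoint
    intro o o' hoo'
    rw [Function.onFun]
    rw [Set.disjoint_left]
    intro x hx hx'
    match o, o' with
    | some i, some j =>
      exact hoo' (by rw [some_inj n m hn hx hx'])
    | some i, none =>
      rcases hx with h | h
      · exact (hx' i).1 h
      · exact (hx' i).2 h
    | none, some j =>
      rcases hx' with h | h
      · exact (hx j).1 h
      · exact (hx j).2 h
    | none, none => exact hoo' rfl
  · -- ping-pong
    intro o o' hne' h h1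
    intro y hy
    rw [Set.mem_smul_set] at hy
    obtain ⟨x, hx, rfl⟩ := hy
    match o, o' with
    | some i, o' =>
      have hxx : ¬ Pw n m i <+: x.toWord ∧ ¬ FreeGroup.invRev (Pw n m i) <+: x.toWord := by
        match o' with
        | some j =>
          constructor
          · intro hcon
            exact hne' (by rw [some_inj n m hn (Or.inl hcon) hx])
          · intro hcon
            exact hne' (by rw [some_inj n m hn (Or.inr hcon) hx])
        | none => exact hx i
      have hfval : ffam n m (some i) h
          = SemidirectProduct.inl (hWord n m i ^ Multiplicative.toAdd h) := by
        show zpowersHom (Gsd n m) (SemidirectProduct.inl (hWord n m i)) h = _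
        rw [zpowersHom_apply, ← _root_.map_zpow]
      have hsm : ffam n m (some i) h • x = hWord n m i ^ Multiplicative.toAdd h * x := by
        rw [hsmul, hfval, SemidirectProduct.left_inl, SemidirectProduct.right_inl,
          _root_.map_one (permAutS n m)]
        rfl
      have hz : Multiplicative.toAdd h ≠ 0 := by
        intro hcon
        apply h1
        have : Multiplicative.toAdd h = Multiplicative.toAdd (1 : Multiplicative ℤ) := hcon
        exact Multiplicative.toAdd.injective this
      show _ ∈ Xset n m (some i)
      rw [hsm]
      exact hpp_some_aux n m i (Multiplicative.toAdd h) hz x hxx.1 hxx.2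
    | none, o' =>
      match o' with
      | none => exact absurd rfl hne'
      | some i =>
        have hσw : ¬ ((h.1 : Equiv.Perm (Fin n)) = 1 ∧ h.2 = 1) := by
          intro ⟨hh1, hh2⟩
          exact h1 (Prod.ext hh1 hh2)
        have hsm : ffam n m none h • x = βm n m h.2 * permAutS n m h.1 x := by
          rw [hsmul]
          rfl
        show _ ∈ Xset n m none
        rw [hsm]
        intro j
        exact hpp_none_aux n m hn h.1 h.2 hσw i x hx j

end PingPongAux


namespace PingPongAux

open FreeGroup Monoid

variable (n m : ℕ)

/-- Retraction family for showing `Φ` is injective. -/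
def gfam : ∀ o, Hfam n m o →*
    Monoid.Coprod (FreeGroup (Fin n)) (Equiv.Perm (Fin n) × FreeGroup (Fin m))
  | none => Coprod.inr
  | some i => zpowersHom _ (Coprod.inl (FreeGroup.of i))

def ΦL : FreeGroup (Fin n) →* Monoid.CoprodI (Hfam n m) :=
  FreeGroup.lift (fun i =>
    Monoid.CoprodI.of (M := Hfam n m) (i := some i) (Multiplicative.ofAdd (1 : ℤ)))

def Φ : Monoid.Coprod (FreeGroup (Fin n)) (Equiv.Perm (Fin n) × FreeGroup (Fin m)) →*
    Monoid.CoprodI (Hfam n m) :=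
  Coprod.lift (ΦL n m) (Monoid.CoprodI.of (M := Hfam n m) (i := none))

theorem Φ_injective : Function.Injective ⇑(Φ n m) := by
  have hcomp : (Monoid.CoprodI.lift (gfam n m)).comp (Φ n m) = MonoidHom.id _ := by
    apply Coprod.hom_ext
    · apply FreeGroup.ext_hom
      intro a
      show Monoid.CoprodI.lift (gfam n m) (Φ n m (Coprod.inl (FreeGroup.of a)))
          = Coprod.inl (FreeGroup.of a)
      have hΦ : Φ n m (Coprod.inl (FreeGroup.of a))
          = Monoid.CoprodI.of (M := Hfam n m) (i := some a) (Multiplicative.ofAdd (1 : ℤ)) := by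
        simp only [Φ]
        rw [Coprod.lift_apply_inl]
        simp only [ΦL]
        rw [FreeGroup.lift_apply_of]
      rw [hΦ, Monoid.CoprodI.lift_of]
      show zpowersHom _ (Coprod.inl (FreeGroup.of a)) (Multiplicative.ofAdd (1 : ℤ)) = _
      rw [zpowersHom_apply, toAdd_ofAdd, zpow_one]
    · apply MonoidHom.ext
      intro p
      show Monoid.CoprodI.lift (gfam n m) (Φ n m (Coprod.inr p)) = Coprod.inr p
      have hΦ : Φ n m (Coprod.inr p)
          = Monoid.CoprodI.of (M := Hfam n m) (i := none) p := by
        simp only [Φ]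
        rw [Coprod.lift_apply_inr]
      rw [hΦ, Monoid.CoprodI.lift_of]
      rfl
  intro a b hab
  have h2 := congrArg (Monoid.CoprodI.lift (gfam n m)) hab
  rw [← MonoidHom.comp_apply, ← MonoidHom.comp_apply, hcomp, MonoidHom.id_apply,
    MonoidHom.id_apply] at h2
  exact h2

end PingPongAux

open Monoid in
theorem free_prod_embeds_semidirect' (n m : ℕ) (hn : 1 ≤ n) :
    (∀ (σ : Equiv.Perm (Fin n)) (j : Fin m),
      Commute (SemidirectProduct.inr (φ := permAutS n m) σ)
        (SemidirectProduct.inl (FreeGroup.of (Sum.inr j : Fin n ⊕ Fin m)))) ∧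
    (∀ ψ : Monoid.Coprod (FreeGroup (Fin n)) (Equiv.Perm (Fin n) × FreeGroup (Fin m)) →*
        FreeGroup (Fin n ⊕ Fin m) ⋊[permAutS n m] Equiv.Perm (Fin n),
      (∀ i : Fin n, ψ (Coprod.inl (FreeGroup.of i)) = SemidirectProduct.inl (hWord n m i)) →
      (∀ σ : Equiv.Perm (Fin n), ψ (Coprod.inr (σ, 1)) = SemidirectProduct.inr σ) →
      (∀ j : Fin m, ψ (Coprod.inr (1, FreeGroup.of j))
          = SemidirectProduct.inl (FreeGroup.of (Sum.inr j : Fin n ⊕ Fin m))) →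
      Function.Injective ψ) := by
  constructor
  · intro σ j
    have h := PingPongAux.commute_inr_inl_beta n m σ (FreeGroup.of j)
    have hβ : PingPongAux.βm n m (FreeGroup.of j)
        = FreeGroup.of (Sum.inr j : Fin n ⊕ Fin m) := FreeGroup.map.of
    rw [hβ] at h
    exact h
  · intro ψ h1 h2 h3
    classical
    have hψ : ψ = (Monoid.CoprodI.lift (PingPongAux.ffam n m)).comp (PingPongAux.Φ n m) := by
      apply Coprod.hom_ext
      · apply FreeGroup.ext_hom
        intro a
        show ψ (Coprod.inl (FreeGroup.of a))
            = Monoid.CoprodI.lift (PingPongAux.ffam n m)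
                (PingPongAux.Φ n m (Coprod.inl (FreeGroup.of a)))
        have hΦ : PingPongAux.Φ n m (Coprod.inl (FreeGroup.of a))
            = Monoid.CoprodI.of (M := PingPongAux.Hfam n m) (i := some a)
                (Multiplicative.ofAdd (1 : ℤ)) := by
          simp only [PingPongAux.Φ]
          rw [Coprod.lift_apply_inl]
          simp only [PingPongAux.ΦL]
          rw [FreeGroup.lift_apply_of]
        rw [h1 a, hΦ, Monoid.CoprodI.lift_of]
        show SemidirectProduct.inl (hWord n m a)
            = zpowersHom (PingPongAux.Gsd n m) (SemidirectProduct.inl (hWord n m a))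
                (Multiplicative.ofAdd (1 : ℤ))
        rw [zpowersHom_apply, toAdd_ofAdd, zpow_one]
      · have key : ψ.comp Coprod.inr = PingPongAux.fK n m := by
          apply MonoidHom.ext
          intro p
          obtain ⟨σ, w⟩ := p
          have hw : ψ (Coprod.inr ((1 : Equiv.Perm (Fin n)), w))
              = SemidirectProduct.inl (PingPongAux.βm n m w) := by
            have hhom : ψ.comp ((Coprod.inr).comp
                  (MonoidHom.inr (Equiv.Perm (Fin n)) (FreeGroup (Fin m))))
                = (SemidirectProduct.inl (φ := permAutS n m)).comp (PingPongAux.βm n m) := by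
              apply FreeGroup.ext_hom
              intro b
              show ψ (Coprod.inr ((1 : Equiv.Perm (Fin n)), FreeGroup.of b))
                  = SemidirectProduct.inl (PingPongAux.βm n m (FreeGroup.of b))
              rw [h3 b, show PingPongAux.βm n m (FreeGroup.of b)
                  = FreeGroup.of (Sum.inr b : Fin n ⊕ Fin m) from FreeGroup.map.of]
            exact DFunLike.congr_fun hhom w
          have hsplit : ((σ, w) : Equiv.Perm (Fin n) × FreeGroup (Fin m))
              = (σ, (1 : FreeGroup (Fin m))) * ((1 : Equiv.Perm (Fin n)), w) := by
            rw [Prod.mk_mul_mk, mul_one, one_mul]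
          show ψ (Coprod.inr (σ, w)) = PingPongAux.fK n m (σ, w)
          rw [PingPongAux.fK_eq]
          conv_lhs => rw [hsplit]
          rw [map_mul, map_mul, h2, hw]
          exact PingPongAux.commute_inr_inl_beta n m σ w
        rw [key]
        apply MonoidHom.ext
        intro p
        show PingPongAux.fK n m p
            = Monoid.CoprodI.lift (PingPongAux.ffam n m)
                (PingPongAux.Φ n m (Coprod.inr p))
        have hΦ : PingPongAux.Φ n m (Coprod.inr p)
            = Monoid.CoprodI.of (M := PingPongAux.Hfam n m) (i := none) p := by
          simp only [PingPongAux.Φ]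
          rw [Coprod.lift_apply_inr]
        rw [hΦ, Monoid.CoprodI.lift_of]
        rfl
    rw [hψ, MonoidHom.coe_comp]
    exact (PingPongAux.lift_ffam_injective n m hn).comp (PingPongAux.Φ_injective n m)


open Monoid in
/-- (a) In `F_r ⋊[α] Sₙ` the elements `(1, σ)` and `(g_j, 1)` commute for `n + 1 ≤ j ≤ r`;
(b) the homomorphism from the free product `Fₙ ∗ (Sₙ × Fₘ)` to `F_r ⋊[α] Sₙ` determined by
sending the `i`-th free generator to `(h_i, 1)`, each `(σ, 1)` to `(1, σ)`, and the `j`-th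
generator of `Fₘ` to `(g_{n+j}, 1)`, is injective. -/
theorem free_prod_embeds_semidirect (n m : ℕ) (hn : 1 ≤ n) :
    (∀ (σ : Equiv.Perm (Fin n)) (j : Fin m),
      Commute (SemidirectProduct.inr (φ := permAutS n m) σ)
        (SemidirectProduct.inl (FreeGroup.of (Sum.inr j : Fin n ⊕ Fin m)))) ∧
    (∀ ψ : Monoid.Coprod (FreeGroup (Fin n)) (Equiv.Perm (Fin n) × FreeGroup (Fin m)) →*
        FreeGroup (Fin n ⊕ Fin m) ⋊[permAutS n m] Equiv.Perm (Fin n),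
      (∀ i : Fin n, ψ (Coprod.inl (FreeGroup.of i)) = SemidirectProduct.inl (hWord n m i)) →
      (∀ σ : Equiv.Perm (Fin n), ψ (Coprod.inr (σ, 1)) = SemidirectProduct.inr σ) →
      (∀ j : Fin m, ψ (Coprod.inr (1, FreeGroup.of j))
          = SemidirectProduct.inl (FreeGroup.of (Sum.inr j : Fin n ⊕ Fin m))) →
      Function.Injective ψ) :=
  free_prod_embeds_semidirect' n m hn
end
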